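/- arXiv:2401.17720 — 9 statements merged into one kernel-verified Lean document; each statement's English description precedes it below -/
import Mathlib

section
/- Let z be a real number with |z| < 1. Define a(0) = 0 and a(n) = (2n−1)(z+2) for n ≥ 1, and b(0) = 2z and b(n) = −n²z² for n ≥ 1. Then the convergents p(n)/q(n) of the continued fraction with partial quotients (a(n), b(n)) converge to log(1+z) as n → ∞. -/
open Filter Topology intervalIntegral

noncomputable def cfJ (z : ℝ) (n : ℕ) : ℝ :=
  ∫ t in (0:ℝ)..1, (t * (1 - t)) ^ n / (1 + z * t) ^ (n + 1)

lemma cf_wpos {z : ℝ} (hz : |z| < 1) {t : ℝ} (ht : t ∈ Set.uIcc (0:ℝ) 1) :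
    0 < 1 + z * t := by
  rw [Set.uIcc_of_le (by norm_num)] at ht
  obtain ⟨ht0, ht1⟩ := ht
  obtain ⟨hz1, hz2⟩ := abs_lt.mp hz
  rcases le_or_gt 0 z with h | h
  · nlinarith
  · nlinarith

lemma cf_hw (z t : ℝ) : HasDerivAt (fun u : ℝ => 1 + z * u) z t := by
  simpa using ((hasDerivAt_id t).const_mul z).const_add 1

lemma cf_contf {z : ℝ} (hz : |z| < 1) (m : ℕ) :
    ContinuousOn (fun t : ℝ => (t * (1 - t)) ^ m / (1 + z * t) ^ (m + 1)) (Set.uIcc (0:ℝ) 1) :=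
  ContinuousOn.div (Continuous.continuousOn (by continuity))
    (Continuous.continuousOn (by continuity))
    (fun t ht => pow_ne_zero _ (cf_wpos hz ht).ne')

lemma cf_intf {z : ℝ} (hz : |z| < 1) (m : ℕ) :
    IntervalIntegrable (fun t : ℝ => (t * (1 - t)) ^ m / (1 + z * t) ^ (m + 1))
      MeasureTheory.volume 0 1 :=
  (cf_contf hz m).intervalIntegrable

lemma cfJ0 {z : ℝ} (hz : |z| < 1) : z * cfJ z 0 = Real.log (1 + z) := by
  have h : ∀ t ∈ Set.uIcc (0:ℝ) 1, HasDerivAt (fun u => Real.log (1 + z * u))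
      (z * ((t * (1 - t)) ^ 0 / (1 + z * t) ^ (0 + 1))) t := by
    intro t ht
    have hw := cf_wpos hz ht
    have := (cf_hw z t).log hw.ne'
    convert this using 1
    field_simp
    ring
  have hint : IntervalIntegrable (fun t : ℝ => z * ((t * (1 - t)) ^ 0 / (1 + z * t) ^ (0 + 1)))
      MeasureTheory.volume 0 1 := (cf_intf hz 0).const_mul z
  have h2 := intervalIntegral.integral_eq_sub_of_hasDerivAt h hint
  rw [intervalIntegral.integral_const_mul] at h2
  unfold cfJ
  simpa using h2

lemma cfJ1 {z : ℝ} (hz : |z| < 1) :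
    z ^ 3 * cfJ z 1 = (z + 2) * Real.log (1 + z) - 2 * z := by
  have h1z : (0:ℝ) < 1 + z := by
    have := abs_lt.mp hz; linarith [this.1]
  have h : ∀ t ∈ Set.uIcc (0:ℝ) 1, HasDerivAt
      (fun u => -(z * u) + (z + 2) * Real.log (1 + z * u) + (z + 1) / (1 + z * u))
      (z ^ 3 * ((t * (1 - t)) ^ 1 / (1 + z * t) ^ (1 + 1))) t := by
    intro t ht
    have hw := cf_wpos hz ht
    have h1 : HasDerivAt (fun u : ℝ => -(z * u)) (-z) t := by
      simpa using (show HasDerivAt (fun u : ℝ => -(z * id u)) (-(z * 1)) t from ((hasDerivAt_id t).const_mul z).neg)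
    have h2 : HasDerivAt (fun u => (z + 2) * Real.log (1 + z * u))
        ((z + 2) * (z / (1 + z * t))) t := ((cf_hw z t).log hw.ne').const_mul (z + 2)
    have h3 : HasDerivAt (fun u => (z + 1) / (1 + z * u))
        ((0 * (1 + z * t) - (z + 1) * z) / (1 + z * t) ^ 2) t :=
      (hasDerivAt_const t (z + 1)).div (cf_hw z t) hw.ne'
    convert (show HasDerivAt (fun u => -(z * u) + (z + 2) * Real.log (1 + z * u) + (z + 1) / (1 + z * u)) _ t from (h1.add h2).add h3) using 1
    field_simp
    ring
  have hint : IntervalIntegrable (fun t : ℝ => z ^ 3 * ((t * (1 - t)) ^ 1 / (1 + z * t) ^ (1 + 1)))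
      MeasureTheory.volume 0 1 := (cf_intf hz 1).const_mul _
  have h2 := intervalIntegral.integral_eq_sub_of_hasDerivAt h hint
  rw [intervalIntegral.integral_const_mul] at h2
  unfold cfJ
  rw [h2]
  have hd : (z + 1) / (1 + z * 1) = 1 := by
    rw [mul_one, add_comm 1 z]; exact div_self (by linarith)
  rw [hd]
  simp [Real.log_one]
  ring

lemma cfJrec {z : ℝ} (hz : |z| < 1) (n : ℕ) :
    ((n:ℝ) + 2) * z ^ 2 * cfJ z (n + 2)
      = (2 * (n:ℝ) + 3) * (z + 2) * cfJ z (n + 1) - ((n:ℝ) + 1) * cfJ z n := by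
  have hderiv : ∀ t ∈ Set.uIcc (0:ℝ) 1, HasDerivAt
      (fun u => (u * (1 - u)) ^ (n + 1) * (1 - 2 * u - z * u ^ 2) / (1 + z * u) ^ (n + 2))
      (((n:ℝ) + 2) * z ^ 2 * ((t * (1 - t)) ^ (n + 2) / (1 + z * t) ^ (n + 2 + 1))
        - (2 * (n:ℝ) + 3) * (z + 2) * ((t * (1 - t)) ^ (n + 1) / (1 + z * t) ^ (n + 1 + 1))
        + ((n:ℝ) + 1) * ((t * (1 - t)) ^ n / (1 + z * t) ^ (n + 1))) t := by
    intro t ht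
    have hw := cf_wpos hz ht
    have hN1 : HasDerivAt (fun u : ℝ => u * (1 - u)) (1 - 2 * t) t := by
      have : HasDerivAt (fun u : ℝ => u * (1 - u)) _ t := (hasDerivAt_id t).mul ((hasDerivAt_id t).const_sub 1)
      convert this using 1
      simp; ring
    have hN : HasDerivAt (fun u : ℝ => (u * (1 - u)) ^ (n + 1))
        ((n + 1 : ℝ) * (t * (1 - t)) ^ n * (1 - 2 * t)) t := by
      have : HasDerivAt (fun u : ℝ => (u * (1 - u)) ^ (n + 1)) _ t := hN1.pow (n + 1)
      simpa using this
    have hQ : HasDerivAt (fun u : ℝ => 1 - 2 * u - z * u ^ 2) (-2 - z * (2 * t)) t := by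
      have : HasDerivAt (fun u : ℝ => 1 - 2 * u - z * u ^ 2) _ t := (((hasDerivAt_id t).const_mul 2).const_sub 1).sub ((hasDerivAt_pow 2 t).const_mul z)
      convert this using 1
      norm_num
    have hD : HasDerivAt (fun u : ℝ => (1 + z * u) ^ (n + 2))
        ((n + 2 : ℝ) * (1 + z * t) ^ (n + 1) * z) t := by
      have : HasDerivAt (fun u : ℝ => (1 + z * u) ^ (n + 2)) _ t := (cf_hw z t).pow (n + 2)
      simpa using this
    have : HasDerivAt (fun u => (u * (1 - u)) ^ (n + 1) * (1 - 2 * u - z * u ^ 2) / (1 + z * u) ^ (n + 2)) _ t := (show HasDerivAt (fun u : ℝ => (u * (1 - u)) ^ (n + 1) * (1 - 2 * u - z * u ^ 2)) _ t from hN.mul hQ).div hD (pow_ne_zero _ hw.ne')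
    convert this using 1
    have hwne : (1 + z * t) ≠ 0 := hw.ne'
    field_simp
    ring
  have hint : ∀ m : ℕ, IntervalIntegrable
      (fun t : ℝ => (t * (1 - t)) ^ m / (1 + z * t) ^ (m + 1)) MeasureTheory.volume 0 1 :=
    cf_intf hz
  have hintG : IntervalIntegrable (fun t : ℝ =>
      ((n:ℝ) + 2) * z ^ 2 * ((t * (1 - t)) ^ (n + 2) / (1 + z * t) ^ (n + 2 + 1))
        - (2 * (n:ℝ) + 3) * (z + 2) * ((t * (1 - t)) ^ (n + 1) / (1 + z * t) ^ (n + 1 + 1))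
        + ((n:ℝ) + 1) * ((t * (1 - t)) ^ n / (1 + z * t) ^ (n + 1))) MeasureTheory.volume 0 1 :=
    (((hint (n + 2)).const_mul _).sub ((hint (n + 1)).const_mul _)).add ((hint n).const_mul _)
  have h0 := intervalIntegral.integral_eq_sub_of_hasDerivAt hderiv hintG
  rw [intervalIntegral.integral_add (((hint (n+2)).const_mul _).sub ((hint (n+1)).const_mul _))
      ((hint n).const_mul _),
    intervalIntegral.integral_sub ((hint (n+2)).const_mul _) ((hint (n+1)).const_mul _),
    intervalIntegral.integral_const_mul, intervalIntegral.integral_const_mul,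
    intervalIntegral.integral_const_mul] at h0
  have hF1 : ((1:ℝ) * (1 - 1)) ^ (n + 1) * (1 - 2 * 1 - z * 1 ^ 2) / (1 + z * 1) ^ (n + 2) = 0 := by
    simp
  have hF0 : ((0:ℝ) * (1 - 0)) ^ (n + 1) * (1 - 2 * 0 - z * 0 ^ 2) / (1 + z * 0) ^ (n + 2) = 0 := by
    simp
  rw [hF1, hF0] at h0
  unfold cfJ
  linarith [h0]

lemma cfJ_nonneg {z : ℝ} (hz : |z| < 1) (n : ℕ) : 0 ≤ cfJ z n := by
  apply intervalIntegral.integral_nonneg (by norm_num)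
  intro u hu
  have hw : 0 < 1 + z * u := cf_wpos hz (by rw [Set.uIcc_of_le (by norm_num)]; exact hu)
  have h1 : 0 ≤ u * (1 - u) := mul_nonneg hu.1 (by linarith [hu.2])
  positivity

lemma cfJ_le {z : ℝ} (hz : |z| < 1) (n : ℕ) :
    cfJ z n ≤ (1 / (1 + Real.sqrt (1 + z)) ^ 2) ^ n * (1 / (1 - |z|)) := by
  obtain ⟨hz1, hz2⟩ := abs_lt.mp hz
  set s := Real.sqrt (1 + z) with hs
  have hs0 : 0 ≤ s := Real.sqrt_nonneg _
  have hs2 : s ^ 2 = 1 + z := Real.sq_sqrt (by linarith)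
  have hsp : (0:ℝ) < (1 + s) ^ 2 := by positivity
  have habs : (0:ℝ) < 1 - |z| := by linarith [hz]
  have key : ∀ u ∈ Set.Icc (0:ℝ) 1,
      (u * (1 - u)) ^ n / (1 + z * u) ^ (n + 1)
        ≤ (1 / (1 + s) ^ 2) ^ n * (1 / (1 - |z|)) := by
    intro u hu
    have hw : 0 < 1 + z * u := cf_wpos hz (by rw [Set.uIcc_of_le (by norm_num)]; exact hu)
    have hwb : 1 - |z| ≤ 1 + z * u := by
      have h1 : |z * u| ≤ |z| := by
        rw [abs_mul]
        calc |z| * |u| ≤ |z| * 1 := by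
              apply mul_le_mul_of_nonneg_left _ (abs_nonneg z)
              rw [abs_of_nonneg hu.1]; exact hu.2
          _ = |z| := mul_one _
      have := abs_le.mp h1
      linarith [this.1]
    have hg : u * (1 - u) ≤ (1 / (1 + s) ^ 2) * (1 + z * u) := by
      rw [div_mul_eq_mul_div, one_mul, le_div_iff₀ hsp]
      nlinarith [sq_nonneg (u * (1 + s) - 1), hu.1, hs2]
    have hnum : (u * (1 - u)) ^ n ≤ ((1 / (1 + s) ^ 2) * (1 + z * u)) ^ n :=
      pow_le_pow_left₀ (mul_nonneg hu.1 (by linarith [hu.2])) hg n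
    calc (u * (1 - u)) ^ n / (1 + z * u) ^ (n + 1)
        ≤ ((1 / (1 + s) ^ 2) * (1 + z * u)) ^ n / (1 + z * u) ^ (n + 1) := by
          apply div_le_div_of_nonneg_right hnum (by positivity) |>.trans_eq rfl
      _ = (1 / (1 + s) ^ 2) ^ n / (1 + z * u) := by
          rw [mul_pow, pow_succ]
          field_simp
          ring
      _ ≤ (1 / (1 + s) ^ 2) ^ n * (1 / (1 - |z|)) := by
          rw [mul_one_div]
          exact div_le_div_of_nonneg_left (by positivity) habs hwb
  have hconst : IntervalIntegrable (fun _ : ℝ => (1 / (1 + s) ^ 2) ^ n * (1 / (1 - |z|)))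
      MeasureTheory.volume 0 1 := intervalIntegrable_const
  have := intervalIntegral.integral_mono_on (by norm_num) (cf_intf hz n) hconst key
  unfold cfJ
  simpa using this

theorem stmt_0 (z : ℝ) (hz : |z| < 1)
    (a b p q : ℕ → ℝ)
    (ha0 : a 0 = 0)
    (ha : ∀ n : ℕ, 1 ≤ n → a n = (2 * (n : ℝ) - 1) * (z + 2))
    (hb0 : b 0 = 2 * z)
    (hb : ∀ n : ℕ, 1 ≤ n → b n = -(n : ℝ) ^ 2 * z ^ 2)
    (hp0 : p 0 = a 0) (hq0 : q 0 = 1)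
    (hp1 : p 1 = a 0 * a 1 + b 0) (hq1 : q 1 = a 1)
    (hp : ∀ n : ℕ, p (n + 2) = a (n + 2) * p (n + 1) + b (n + 1) * p n)
    (hq : ∀ n : ℕ, q (n + 2) = a (n + 2) * q (n + 1) + b (n + 1) * q n) :
    Tendsto (fun n => p n / q n) atTop (𝓝 (Real.log (1 + z))) := by
  obtain ⟨hz1, hz2⟩ := abs_lt.mp hz
  -- key identity: q n * log(1+z) - p n = n! * z^(2n+1) * J n
  have key : ∀ n : ℕ, q n * Real.log (1 + z) - p n
      = (n.factorial : ℝ) * z ^ (2 * n + 1) * cfJ z n := by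
    have main : ∀ n : ℕ,
        (q n * Real.log (1 + z) - p n = (n.factorial : ℝ) * z ^ (2 * n + 1) * cfJ z n) ∧
        (q (n + 1) * Real.log (1 + z) - p (n + 1)
          = ((n + 1).factorial : ℝ) * z ^ (2 * (n + 1) + 1) * cfJ z (n + 1)) := by
      intro n
      induction n with
      | zero =>
        constructor
        · rw [hq0, hp0, ha0]
          have := cfJ0 hz
          norm_num [Nat.factorial]
          linarith
        · have h1 : a 1 = z + 2 := by rw [ha 1 le_rfl]; norm_num
          rw [hq1, hp1, ha0, hb0, h1]
          have := cfJ1 hz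
          norm_num [Nat.factorial]
          linarith
      | succ k ih =>
        refine ⟨ih.2, ?_⟩
        have hak : a (k + 2) = (2 * (k : ℝ) + 3) * (z + 2) := by
          rw [ha (k + 2) (by omega)]; push_cast; ring
        have hbk : b (k + 1) = -((k : ℝ) + 1) ^ 2 * z ^ 2 := by
          rw [hb (k + 1) (by omega)]; push_cast; ring
        have hrec := cfJrec hz k
        calc q (k + 1 + 1) * Real.log (1 + z) - p (k + 1 + 1)
            = a (k + 2) * (q (k + 1) * Real.log (1 + z) - p (k + 1))
              + b (k + 1) * (q k * Real.log (1 + z) - p k) := by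
              rw [hp k, hq k]; ring
          _ = (2 * (k : ℝ) + 3) * (z + 2)
                * (((k + 1).factorial : ℝ) * z ^ (2 * (k + 1) + 1) * cfJ z (k + 1))
              + (-((k : ℝ) + 1) ^ 2 * z ^ 2)
                * ((k.factorial : ℝ) * z ^ (2 * k + 1) * cfJ z k) := by
              rw [ih.1, ih.2, hak, hbk]
          _ = ((k + 1).factorial : ℝ) * z ^ (2 * (k + 1) + 1)
                * ((2 * (k : ℝ) + 3) * (z + 2) * cfJ z (k + 1) - ((k : ℝ) + 1) * cfJ z k) := by
              push_cast [Nat.factorial_succ]; ring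
          _ = ((k + 1).factorial : ℝ) * z ^ (2 * (k + 1) + 1)
                * (((k : ℝ) + 2) * z ^ 2 * cfJ z (k + 2)) := by rw [← hrec]
          _ = ((k + 1 + 1).factorial : ℝ) * z ^ (2 * (k + 1 + 1) + 1) * cfJ z (k + 1 + 1) := by
              push_cast [Nat.factorial_succ]; ring
    exact fun n => (main n).1
  -- lower bound on q
  have hzp : (0:ℝ) < z + 2 := by linarith
  have qb : ∀ n : ℕ, ((n : ℝ) + 1) * (z + 2) * q n ≤ q (n + 1)
      ∧ (n.factorial : ℝ) * (z + 2) ^ n ≤ q n := by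
    intro n
    induction n with
    | zero =>
      constructor
      · rw [hq0, hq1, ha 1 le_rfl]; norm_num
      · rw [hq0]; norm_num
    | succ k ih =>
      obtain ⟨ih1, ih2⟩ := ih
      have hfac : (0:ℝ) < (k.factorial : ℝ) * (z + 2) ^ k := by positivity
      have hqkpos : 0 < q k := lt_of_lt_of_le hfac ih2
      have hqk1pos : 0 < q (k + 1) :=
        lt_of_lt_of_le (mul_pos (mul_pos (by positivity) hzp) hqkpos) ih1
      constructor
      · rw [hq k, ha (k + 2) (by omega), hb (k + 1) (by omega)]
        push_cast
        have h3 : (z + 2) * (((k : ℝ) + 1) * (z + 2) * q k) ≤ (z + 2) * q (k + 1) :=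
          mul_le_mul_of_nonneg_left ih1 (by linarith)
        nlinarith [mul_le_mul_of_nonneg_left h3 (by positivity : (0:ℝ) ≤ (k : ℝ) + 1),
          mul_pos hqkpos (mul_pos hzp hzp), hqkpos, hzp,
          mul_nonneg (mul_nonneg (sq_nonneg ((k:ℝ) + 1)) (by linarith : (0:ℝ) ≤ 4 * z + 4))
            hqkpos.le]
      · calc ((k + 1).factorial : ℝ) * (z + 2) ^ (k + 1)
            = ((k : ℝ) + 1) * (z + 2) * ((k.factorial : ℝ) * (z + 2) ^ k) := by
              push_cast [Nat.factorial_succ]; ring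
          _ ≤ ((k : ℝ) + 1) * (z + 2) * q k :=
              mul_le_mul_of_nonneg_left ih2 (mul_nonneg (by positivity) hzp.le)
          _ ≤ q (k + 1) := ih1
  -- constants
  have hs0 : 0 ≤ Real.sqrt (1 + z) := Real.sqrt_nonneg _
  have hs2 : Real.sqrt (1 + z) ^ 2 = 1 + z := Real.sq_sqrt (by linarith)
  set s : ℝ := Real.sqrt (1 + z) with hsdef
  have habs : (0:ℝ) < 1 - |z| := by linarith
  set M : ℝ := 1 / (1 + s) ^ 2 with hMdef
  set C : ℝ := 1 / (1 - |z|) with hCdef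
  set r : ℝ := z ^ 2 * M / (z + 2) with hrdef
  have hz2pos : (0:ℝ) < z + 2 := hzp
  have hM0 : 0 ≤ M := by positivity
  have hC0 : 0 < C := by positivity
  have hr0 : 0 ≤ r := by positivity
  have hr1 : r < 1 := by
    rw [hrdef, div_lt_one hz2pos, hMdef, mul_one_div, div_lt_iff₀ (by positivity)]
    nlinarith [mul_nonneg hs0 hz2pos.le]
  rw [← tendsto_sub_nhds_zero_iff]
  refine squeeze_zero_norm (a := fun n => |z| * C * r ^ n) ?_ ?_
  · intro n
    have hqpos : 0 < q n := lt_of_lt_of_le (by positivity) (qb n).2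
    have hEq : p n / q n - Real.log (1 + z)
        = -((q n * Real.log (1 + z) - p n) / q n) := by
      field_simp
      ring
    rw [Real.norm_eq_abs, hEq, abs_neg, abs_div, abs_of_pos hqpos, key n]
    have hfacne : ((n.factorial : ℝ)) ≠ 0 := by positivity
    have hheq : (z + 2) ^ n * (|z| * C * r ^ n) = |z| ^ (2 * n + 1) * (M ^ n * C) := by
      have h2 : r * (z + 2) = z ^ 2 * M := div_mul_cancel₀ _ hz2pos.ne'
      calc (z + 2) ^ n * (|z| * C * r ^ n)
          = |z| * C * (r * (z + 2)) ^ n := by rw [mul_pow]; ring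
        _ = |z| * C * (z ^ 2 * M) ^ n := by rw [h2]
        _ = |z| ^ (2 * n + 1) * (M ^ n * C) := by
            have hz21 : |z| ^ (2 * n + 1) = (z ^ 2) ^ n * |z| := by
              rw [pow_succ, pow_mul, sq_abs]
            rw [hz21, mul_pow]; ring
    have hnum : |(n.factorial : ℝ) * z ^ (2 * n + 1) * cfJ z n|
        ≤ (n.factorial : ℝ) * ((z + 2) ^ n * (|z| * C * r ^ n)) := by
      rw [abs_mul, abs_mul, abs_of_nonneg (by positivity : (0:ℝ) ≤ (n.factorial : ℝ)),
        abs_of_nonneg (cfJ_nonneg hz n), abs_pow, hheq]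
      have h1 : cfJ z n ≤ M ^ n * C := cfJ_le hz n
      calc (n.factorial : ℝ) * |z| ^ (2 * n + 1) * cfJ z n
          ≤ (n.factorial : ℝ) * |z| ^ (2 * n + 1) * (M ^ n * C) :=
            mul_le_mul_of_nonneg_left h1 (by positivity)
        _ = (n.factorial : ℝ) * (|z| ^ (2 * n + 1) * (M ^ n * C)) := by ring
    have hden : (n.factorial : ℝ) * (z + 2) ^ n ≤ q n := (qb n).2
    calc |(n.factorial : ℝ) * z ^ (2 * n + 1) * cfJ z n| / q n
        ≤ ((n.factorial : ℝ) * ((z + 2) ^ n * (|z| * C * r ^ n)))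
            / ((n.factorial : ℝ) * (z + 2) ^ n) :=
          div_le_div₀ (by positivity) hnum (by positivity) hden
      _ = |z| * C * r ^ n := by
          rw [mul_div_mul_left _ _ hfacne]
          rw [mul_comm ((z + 2) ^ n)]
          exact mul_div_cancel_right₀ _ (by positivity)
  · simpa using (tendsto_pow_atTop_nhds_zero_of_lt_one hr0 hr1).const_mul (|z| * C)
end

section
/- Define a(0) = 1, a(1) = 4, a(2) = 5, and a(n) = 6 for n ≥ 3, and b(0) = −1, b(1) = 4, and b(n) = (2n−1)² for n ≥ 2. Then the convergents p(n)/q(n) of the continued fraction with partial quotients (a(n), b(n)) converge to π/4 as n → ∞. -/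
open Filter Topology

noncomputable def Dcf (n : ℕ) : ℝ := ∏ k ∈ Finset.range n, (2 * (k : ℝ) + 1)

noncomputable def Scf (n : ℕ) : ℝ := ∑ i ∈ Finset.range n, (-1 : ℝ) ^ i / (2 * (i : ℝ) + 1)

noncomputable def Fcf (n : ℕ) : ℝ :=
  Scf (n + 1) + (-1 : ℝ) ^ (n + 1) * (2 * (n : ℝ) - 1) / (4 * n * (2 * n + 1))

lemma Dcf_pos (n : ℕ) : 0 < Dcf n := by
  apply Finset.prod_pos
  intro i _
  positivity

lemma Dcf_succ (n : ℕ) : Dcf (n + 1) = Dcf n * (2 * (n : ℝ) + 1) :=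
  Finset.prod_range_succ _ _

lemma Scf_succ (n : ℕ) : Scf (n + 1) = Scf n + (-1 : ℝ) ^ n / (2 * (n : ℝ) + 1) :=
  Finset.sum_range_succ _ _

theorem stmt_1 
    (a b p q : ℕ → ℝ)
    (ha0 : a 0 = 1)
    (ha1 : a 1 = 4) (ha2 : a 2 = 5)
    (ha : ∀ n : ℕ, 3 ≤ n → a n = 6)
    (hb0 : b 0 = -1)
    (hb1 : b 1 = 4)
    (hb : ∀ n : ℕ, 2 ≤ n → b n = (2 * (n : ℝ) - 1) ^ 2)
    (hp0 : p 0 = a 0) (hq0 : q 0 = 1)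
    (hp1 : p 1 = a 0 * a 1 + b 0) (hq1 : q 1 = a 1)
    (hp : ∀ n : ℕ, p (n + 2) = a (n + 2) * p (n + 1) + b (n + 1) * p n)
    (hq : ∀ n : ℕ, q (n + 2) = a (n + 2) * q (n + 1) + b (n + 1) * q n) :
    Tendsto (fun n => p n / q n) atTop (𝓝 (Real.pi / 4)) := by
  -- key closed forms
  have hScf2 : Scf 2 = 2/3 := by
    simp [Scf_succ, Scf]
    norm_num
  have hF1 : Fcf 1 = 3/4 := by
    simp only [Fcf]
    rw [show (1:ℕ)+1 = 2 from rfl, hScf2]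
    norm_num
  have hF2 : Fcf 2 = 19/24 := by
    simp only [Fcf]
    rw [show (2:ℕ)+1 = 3 from rfl, Scf_succ, hScf2]
    norm_num
  have hD1 : Dcf 1 = 1 := by simp [Dcf_succ, Dcf]
  have hD2 : Dcf 2 = 3 := by rw [Dcf_succ, hD1]; norm_num
  set C : ℕ → Prop := fun k =>
    q (k+1) = 4 * ((k:ℝ)+1) * Dcf (k+1) ∧
    p (k+1) = 4 * ((k:ℝ)+1) * Dcf (k+1) * Fcf (k+1) with hC
  have key : ∀ k, C k ∧ C (k+1) := by
    intro k
    induction k with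
    | zero =>
      have c0 : C 0 := by
        constructor
        · rw [hq1, ha1, hD1]; norm_num
        · rw [hp1, ha0, ha1, hb0, hD1, hF1]; norm_num
      have c1 : C 1 := by
        constructor
        · rw [hq 0, ha2, hq1, ha1, hb1, hq0, hD2]; norm_num
        · rw [hp 0, ha2, hp1, hb1, hp0, hb0, ha0, ha1, hD2, hF2]; norm_num
      exact ⟨c0, c1⟩
    | succ k ih =>
      refine ⟨ih.2, ?_, ?_⟩
      · -- q (k+3)
        have e2 : Dcf (k+1+1) = Dcf (k+1) * (2*((k:ℝ)+1)+1) := by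
          rw [Dcf_succ]; push_cast; ring
        have e3 : Dcf (k+1+1+1) = Dcf (k+1+1) * (2*((k:ℝ)+2)+1) := by
          rw [Dcf_succ]; push_cast; ring
        rw [hq (k+1), ha (k+3) (by omega), hb (k+2) (by omega), ih.2.1, ih.1.1,
          e3, e2]
        push_cast
        ring
      · -- p (k+3)
        have e2 : Dcf (k+1+1) = Dcf (k+1) * (2*((k:ℝ)+1)+1) := by
          rw [Dcf_succ]; push_cast; ring
        have e3 : Dcf (k+1+1+1) = Dcf (k+1+1) * (2*((k:ℝ)+2)+1) := by
          rw [Dcf_succ]; push_cast; ring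
        have s3 : Scf (k+1+1+1) = Scf (k+1+1) + (-1:ℝ)^(k+2)/(2*((k:ℝ)+2)+1) := by
          rw [show k+1+1+1 = (k+2)+1 from rfl, Scf_succ]; push_cast; ring_nf
        have s4 : Scf (k+1+1+1+1) = Scf (k+1+1+1) + (-1:ℝ)^(k+3)/(2*((k:ℝ)+3)+1) := by
          rw [show k+1+1+1+1 = (k+3)+1 from rfl, Scf_succ]; push_cast; ring_nf
        rw [hp (k+1), ha (k+3) (by omega), hb (k+2) (by omega), ih.2.2, ih.1.2]
        simp only [Fcf]
        rw [s4, s3, e3, e2]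
        push_cast
        have h3 : (2*(k:ℝ)+3) ≠ 0 := by positivity
        have h5 : (2*(k:ℝ)+5) ≠ 0 := by positivity
        have h7 : (2*(k:ℝ)+7) ≠ 0 := by positivity
        have hk1 : ((k:ℝ)+1) ≠ 0 := by positivity
        have hk2 : ((k:ℝ)+2) ≠ 0 := by positivity
        have hk3 : ((k:ℝ)+3) ≠ 0 := by positivity
        simp only [pow_succ]
        field_simp
        ring
  -- hence p n / q n = Fcf n for n ≥ 1
  have hpq : ∀ n : ℕ, 1 ≤ n → p n / q n = Fcf n := by
    intro n hn
    obtain ⟨k, rfl⟩ : ∃ k, n = k + 1 := ⟨n - 1, by omega⟩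
    have hk := (key k).1
    have hqpos : (0:ℝ) < 4 * ((k:ℝ)+1) * Dcf (k+1) := by
      have := Dcf_pos (k+1); positivity
    rw [hk.1, hk.2]
    field_simp
    exact mul_div_cancel_left₀ _ (Dcf_pos (k+1)).ne'
  -- limit of Fcf
  have hS : Tendsto (fun n => Scf (n+1)) atTop (𝓝 (Real.pi/4)) :=
    (Real.tendsto_sum_pi_div_four).comp (tendsto_add_atTop_nat 1)
  have hc : Tendsto (fun n : ℕ => (-1:ℝ)^(n+1) * (2*(n:ℝ)-1) / (4*n*(2*n+1)))
      atTop (𝓝 0) := by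
    apply squeeze_zero_norm' (a := fun n : ℕ => 1/(n:ℝ))
    · filter_upwards [eventually_ge_atTop 1] with n hn
      have hn' : (1:ℝ) ≤ (n:ℝ) := by exact_mod_cast hn
      have h1 : (0:ℝ) < 4*(n:ℝ)*(2*n+1) := by positivity
      rw [Real.norm_eq_abs, abs_div, abs_mul, abs_pow, abs_neg, abs_one, one_pow, one_mul,
        abs_of_pos h1, div_le_div_iff₀ h1 (by positivity)]
      have h2 : |2*(n:ℝ)-1| ≤ 2*n := by
        rw [abs_le]; constructor <;> nlinarith
      nlinarith [abs_nonneg (2*(n:ℝ)-1)]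
    · exact tendsto_one_div_atTop_nhds_zero_nat
  have hF : Tendsto Fcf atTop (𝓝 (Real.pi/4)) := by
    have := hS.add hc
    rw [add_zero] at this
    exact this
  apply Tendsto.congr' _ hF
  filter_upwards [eventually_ge_atTop 1] with n hn
  exact (hpq n hn).symm
end

section
/- Define a(0) = 1/2 and a(n) = 3n for n ≥ 1, and b(0) = 1/2 and b(n) = −2n² for n ≥ 1. Then the convergents p(n)/q(n) of the continued fraction with partial quotients (a(n), b(n)) converge to log(2) as n → ∞. -/
open Filter Topology Finset

noncomputable def fterm (k : ℕ) : ℝ :=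
  2 / (((k : ℝ) + 1) * ((k : ℝ) + 2) * ((k : ℝ) + 3) * 2 ^ (k + 1))

noncomputable def Sfun (n : ℕ) : ℝ := 1 / 2 + ∑ i ∈ Finset.range n, fterm i

noncomputable def Qfun (n : ℕ) : ℝ := (n.factorial : ℝ) * ((n : ℝ) + 2) * 2 ^ n / 2

lemma Qfun_pos (n : ℕ) : 0 < Qfun n := by
  unfold Qfun
  positivity

lemma hasSum_fterm : HasSum fterm (Real.log 2 - 1 / 2) := by
  set g : ℕ → ℝ := fun n => (1/2 : ℝ) ^ (n + 1) / ((n : ℝ) + 1) with hgdef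
  have hg : HasSum g (Real.log 2) := by
    have h := Real.hasSum_pow_div_log_of_abs_lt_one (x := (1/2 : ℝ))
      (by rw [abs_of_nonneg (by norm_num : (0:ℝ) ≤ 1/2)]; norm_num)
    have heq : -Real.log (1 - 1/2) = Real.log 2 := by
      rw [show (1:ℝ) - 1/2 = 2⁻¹ by norm_num, Real.log_inv, neg_neg]
    rw [heq] at h
    exact h.congr_fun fun n => by push_cast [hgdef]; ring
  have h1 : HasSum (fun n => g (n + 1)) (Real.log 2 - ∑ i ∈ range 1, g i) :=
    (hasSum_nat_add_iff' 1).mpr hg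
  have h2 : HasSum (fun n => g (n + 2)) (Real.log 2 - ∑ i ∈ range 2, g i) :=
    (hasSum_nat_add_iff' 2).mpr hg
  have h := (hg.sub (h1.mul_left 4)).add (h2.mul_left 4)
  have hval : Real.log 2 - 4 * (Real.log 2 - ∑ i ∈ range 1, g i)
      + 4 * (Real.log 2 - ∑ i ∈ range 2, g i) = Real.log 2 - 1/2 := by
    simp [hgdef, Finset.sum_range_succ]
    ring
  rw [hval] at h
  refine h.congr_fun fun k => ?_
  have hk1 : (k : ℝ) + 1 ≠ 0 := by positivity
  have hk2 : (k : ℝ) + 2 ≠ 0 := by positivity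
  have hk3 : (k : ℝ) + 3 ≠ 0 := by positivity
  have hp2 : (2 : ℝ) ^ (k + 1) ≠ 0 := by positivity
  simp only [hgdef, fterm]
  push_cast
  field_simp
  have h12 : (1/2 : ℝ) ^ k * 2 ^ k = 1 := by rw [← mul_pow]; norm_num
  linear_combination (-(12 + (k:ℝ) * 10 + (k:ℝ)^2 * 2)) * h12

theorem stmt_2 
    (a b p q : ℕ → ℝ)
    (ha0 : a 0 = 1 / 2)
    (ha : ∀ n : ℕ, 1 ≤ n → a n = 3 * (n : ℝ))
    (hb0 : b 0 = 1 / 2)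
    (hb : ∀ n : ℕ, 1 ≤ n → b n = -2 * (n : ℝ) ^ 2)
    (hp0 : p 0 = a 0) (hq0 : q 0 = 1)
    (hp1 : p 1 = a 0 * a 1 + b 0) (hq1 : q 1 = a 1)
    (hp : ∀ n : ℕ, p (n + 2) = a (n + 2) * p (n + 1) + b (n + 1) * p n)
    (hq : ∀ n : ℕ, q (n + 2) = a (n + 2) * q (n + 1) + b (n + 1) * q n) :
    Tendsto (fun n => p n / q n) atTop (𝓝 (Real.log 2)) := by
  have key : ∀ n : ℕ, q n = Qfun n ∧ p n = Qfun n * Sfun n := by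
    intro n
    induction n using Nat.twoStepInduction with
    | zero =>
      constructor
      · rw [hq0]; unfold Qfun; norm_num
      · rw [hp0, ha0]; unfold Qfun Sfun; norm_num
    | one =>
      have ha1 : a 1 = 3 := by rw [ha 1 le_rfl]; norm_num
      constructor
      · rw [hq1, ha1]; unfold Qfun; norm_num
      · rw [hp1, ha0, ha1, hb0]
        unfold Qfun Sfun fterm
        simp [Finset.sum_range_succ]
        norm_num
    | more n ih1 ih2 =>
      have han : a (n + 2) = 3 * ((n : ℝ) + 2) := by
        rw [ha (n+2) (by omega)]; push_cast; ring
      have hbn : b (n + 1) = -2 * ((n : ℝ) + 1) ^ 2 := by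
        rw [hb (n+1) (by omega)]; push_cast; ring
      have hQrec : Qfun (n + 2) = 3 * ((n : ℝ) + 2) * Qfun (n + 1)
          + (-2 * ((n : ℝ) + 1) ^ 2) * Qfun n := by
        unfold Qfun
        rw [show n + 2 = (n + 1) + 1 from rfl, Nat.factorial_succ (n+1), Nat.factorial_succ n]
        push_cast
        ring
      have hfrec : Qfun (n + 2) * fterm (n + 1) = 2 * ((n : ℝ) + 1) ^ 2 * Qfun n * fterm n := by
        unfold Qfun fterm
        rw [show n + 2 = (n + 1) + 1 from rfl, Nat.factorial_succ (n+1), Nat.factorial_succ n]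
        have h1 : ((n : ℝ) + 1) ≠ 0 := by positivity
        have h2 : ((n : ℝ) + 2) ≠ 0 := by positivity
        have h3 : ((n : ℝ) + 3) ≠ 0 := by positivity
        have h4 : ((n : ℝ) + 4) ≠ 0 := by positivity
        have h5 : (2 : ℝ) ^ (n + 1) ≠ 0 := by positivity
        push_cast
        field_simp
        ring
      constructor
      · rw [hq n, han, hbn, ih1.1, ih2.1, hQrec]
      · rw [hp n, han, hbn, ih1.2, ih2.2]
        have hS2 : Sfun (n + 2) = Sfun (n + 1) + fterm (n + 1) := by
          unfold Sfun; rw [Finset.sum_range_succ]; ring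
        have hS1 : Sfun (n + 1) = Sfun n + fterm n := by
          unfold Sfun; rw [Finset.sum_range_succ]; ring
        have hfrec' : (3 * ((n : ℝ) + 2) * Qfun (n + 1)
            + (-2 * ((n : ℝ) + 1) ^ 2) * Qfun n) * fterm (n + 1)
            = 2 * ((n : ℝ) + 1) ^ 2 * Qfun n * fterm n := by
          rw [← hQrec]; exact hfrec
        rw [hS2, hQrec, hS1]
        linear_combination -hfrec'
  have hpq : ∀ n, p n / q n = Sfun n := by
    intro n
    rw [(key n).1, (key n).2, mul_comm, mul_div_assoc, div_self (ne_of_gt (Qfun_pos n)), mul_one]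
  rw [show Real.log 2 = 1/2 + (Real.log 2 - 1/2) by ring]
  refine Tendsto.congr (fun n => (hpq n).symm) ?_
  exact tendsto_const_nhds.add hasSum_fterm.tendsto_sum_nat
end

section
/- Define a(n) = 2n+1 for n ≥ 0, and b(0) = −1 and b(n) = −n(n+1) for n ≥ 1. Then the convergents p(n)/q(n) of the continued fraction with partial quotients (a(n), b(n)) converge to the integral ∫₀^∞ e^{−t}/(1+t) dt as n → ∞; that is, ∫₀^∞ e^{−t}/(1+t) dt = 1 − 1/(3 − 1·2/(5 − 2·3/(7 − 3·4/(9 − ⋯)))). -/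
open Filter Topology
open MeasureTheory Real Set Polynomial

namespace CFaux

lemma intOn_pow (k : ℕ) : IntegrableOn (fun t : ℝ => t ^ k * Real.exp (-t)) (Ioi 0) := by
  have h := Real.GammaIntegral_convergent (s := (k:ℝ)+1) (by positivity)
  refine (h.congr_fun ?_ measurableSet_Ioi)
  intro x hx
  simp only [add_sub_cancel_right]
  rw [Real.rpow_natCast]; ring

lemma integral_pow_exp (k : ℕ) :
    (∫ t in Ioi (0:ℝ), t ^ k * Real.exp (-t)) = (k.factorial : ℝ) := by
  have h := Real.Gamma_eq_integral (s := (k:ℝ)+1) (by positivity)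
  rw [Real.Gamma_nat_eq_factorial] at h
  rw [h]
  refine setIntegral_congr_fun measurableSet_Ioi ?_
  intro x hx
  simp only [add_sub_cancel_right]
  rw [Real.rpow_natCast]; ring

lemma intOn_poly (P : Polynomial ℝ) :
    IntegrableOn (fun t : ℝ => P.eval t * Real.exp (-t)) (Ioi 0) := by
  have : (fun t : ℝ => P.eval t * Real.exp (-t)) =
      fun t => ∑ i ∈ Finset.range (P.natDegree + 1), (P.coeff i * (t ^ i * Real.exp (-t))) := by
    funext t
    rw [Polynomial.eval_eq_sum_range, Finset.sum_mul]
    exact Finset.sum_congr rfl (fun i _ => by ring)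
  rw [this]
  exact integrable_finset_sum _ (fun i _ => ((intOn_pow i).const_mul _))

noncomputable def J (P : Polynomial ℝ) : ℝ := ∫ t in Ioi (0:ℝ), P.eval t * Real.exp (-t)

lemma J_add (P Q : Polynomial ℝ) : J (P + Q) = J P + J Q := by
  unfold J
  rw [← integral_add (intOn_poly P) (intOn_poly Q)]
  exact setIntegral_congr_fun measurableSet_Ioi (fun x _ => by simp; ring)

lemma J_Cmul (c : ℝ) (P : Polynomial ℝ) : J (Polynomial.C c * P) = c * J P := by
  unfold J
  rw [← integral_const_mul]
  exact setIntegral_congr_fun measurableSet_Ioi (fun x _ => by simp; ring)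

lemma J_sub (P Q : Polynomial ℝ) : J (P - Q) = J P - J Q := by
  have h : P - Q = P + Polynomial.C (-1) * Q := by
    rw [Polynomial.C_neg, Polynomial.C_1]
    ring
  rw [h, J_add, J_Cmul]
  ring

lemma J_pow (k : ℕ) : J (Polynomial.X ^ k) = (k.factorial : ℝ) := by
  unfold J
  rw [← integral_pow_exp k]
  exact setIntegral_congr_fun measurableSet_Ioi (fun x _ => by simp)

lemma J_sum {α : Type*} (s : Finset α) (f : α → Polynomial ℝ) :
    J (∑ i ∈ s, f i) = ∑ i ∈ s, J (f i) := by
  classical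
  induction s using Finset.induction with
  | empty => simp [J]
  | @insert _ _ h ih => rw [Finset.sum_insert h, J_add, ih, Finset.sum_insert h]

noncomputable def LL : ℕ → Polynomial ℝ
  | 0 => 1
  | 1 => Polynomial.C 2 - Polynomial.X
  | (n+2) => (Polynomial.C (2*(n:ℝ)+4) - Polynomial.X) * LL (n+1)
      - Polynomial.C (((n:ℝ)+1)*((n:ℝ)+2)) * LL n

noncomputable def FF (k n : ℕ) : ℝ :=
  (-1)^n * (k+1).factorial * ∏ i ∈ Finset.range n, ((k:ℝ) - i)

lemma FF_rec (k n : ℕ) :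
    FF k (n+2) = (2*n+4) * FF k (n+1) - FF (k+1) (n+1) - (n+1)*(n+2) * FF k n := by
  unfold FF
  have hP : ∏ i ∈ Finset.range (n+1), ((((k+1):ℕ):ℝ) - ↑i)
      = ((k:ℝ)+1) * ∏ i ∈ Finset.range n, ((k:ℝ) - i) := by
    rw [Finset.prod_range_succ']
    rw [Finset.prod_congr rfl (fun i _ => by push_cast; ring :
      ∀ i ∈ Finset.range n, ((((k+1):ℕ):ℝ) - ↑(i+1)) = ((k:ℝ) - i))]
    push_cast; ring
  rw [Finset.prod_range_succ, Finset.prod_range_succ, hP]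
  have h1 : (((k+1+1).factorial : ℝ)) = ((k:ℝ)+2) * (k+1).factorial := by
    rw [Nat.factorial_succ]; push_cast; ring
  rw [h1]
  push_cast
  ring

lemma FF_zero {k n : ℕ} (h : k < n) : FF k n = 0 := by
  unfold FF
  rw [Finset.prod_eq_zero (Finset.mem_range.2 h) (by simp)]
  ring

lemma moment (n : ℕ) : ∀ k, J (Polynomial.X^(k+1) * LL n) = FF k n := by
  induction n using Nat.strong_induction_on with
  | _ n ih =>
    match n with
    | 0 =>
      intro k
      simp only [LL, mul_one, J_pow, FF]
      simp
    | 1 =>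
      intro k
      have hpoly : Polynomial.X^(k+1) * LL 1 =
          Polynomial.C 2 * Polynomial.X^(k+1) - Polynomial.X^(k+2) := by
        simp only [LL]; ring
      rw [hpoly, J_sub, J_Cmul, J_pow, J_pow]
      simp only [FF]
      rw [Nat.factorial_succ (k+1), Finset.prod_range_one]
      push_cast
      ring
    | (m+2) =>
      intro k
      have h1 := ih (m+1) (by omega)
      have h0 := ih m (by omega)
      have hpoly : Polynomial.X^(k+1) * LL (m+2) =
          Polynomial.C (2*(m:ℝ)+4) * (Polynomial.X^(k+1) * LL (m+1))
            - Polynomial.X^(k+2) * LL (m+1)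
            - Polynomial.C (((m:ℝ)+1)*((m:ℝ)+2)) * (Polynomial.X^(k+1) * LL m) := by
        simp only [LL]; ring
      rw [hpoly, J_sub, J_sub, J_Cmul, J_Cmul, h1 k, h0 k]
      have h2 : Polynomial.X ^ (k+2) * LL (m+1) = Polynomial.X ^ (k+1+1) * LL (m+1) := by ring
      rw [h2, h1 (k+1), FF_rec]

lemma LL_natDegree (n : ℕ) : (LL n).natDegree ≤ n := by
  induction n using Nat.strong_induction_on with
  | _ n ih =>
    match n with
    | 0 => simp [LL]
    | 1 =>
      refine le_trans (Polynomial.natDegree_sub_le _ _) ?_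
      simp
    | (m+2) =>
      refine le_trans (Polynomial.natDegree_sub_le _ _) ?_
      refine max_le ?_ ?_
      · refine le_trans (Polynomial.natDegree_mul_le) ?_
        have hd : (Polynomial.C (2*(m:ℝ)+4) - Polynomial.X).natDegree ≤ 1 := by
          refine le_trans (Polynomial.natDegree_sub_le _ _) ?_
          simp only [Polynomial.natDegree_C, Polynomial.natDegree_X]
          norm_num
        have h2 := ih (m+1) (by omega)
        omega
      · refine le_trans (Polynomial.natDegree_mul_le) ?_
        have h2 := ih m (by omega)
        simp only [Polynomial.natDegree_C]
        omega

lemma LL_coeff (n : ℕ) : (LL n).coeff n = (-1)^n := by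
  induction n using Nat.strong_induction_on with
  | _ n ih =>
    match n with
    | 0 => simp [LL]
    | 1 => simp [LL]
    | (m+2) =>
      have e1 : (LL (m+1)).coeff (m+2) = 0 :=
        Polynomial.coeff_eq_zero_of_natDegree_lt (lt_of_le_of_lt (LL_natDegree (m+1)) (by omega))
      have e0 : (LL m).coeff (m+2) = 0 :=
        Polynomial.coeff_eq_zero_of_natDegree_lt (lt_of_le_of_lt (LL_natDegree m) (by omega))
      have hthis : LL (m+2) = (Polynomial.C (2*(m:ℝ)+4) - Polynomial.X) * LL (m+1)
          - Polynomial.C (((m:ℝ)+1)*((m:ℝ)+2)) * LL m := rfl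
      rw [hthis]
      simp only [sub_mul, Polynomial.coeff_sub, Polynomial.coeff_C_mul,
        Polynomial.coeff_X_mul, e1, e0, ih (m+1) (by omega)]
      ring

lemma rep (p : Polynomial ℝ) (n : ℕ) (h : ∀ k, n ≤ k → p.coeff k = 0) :
    p = ∑ i ∈ Finset.range n, Polynomial.C (p.coeff i) * Polynomial.X ^ i := by
  ext m
  rw [Polynomial.finset_sum_coeff]
  simp only [Polynomial.coeff_C_mul, Polynomial.coeff_X_pow, mul_ite, mul_one, mul_zero,
    Finset.sum_ite_eq, Finset.mem_range]
  by_cases hm : m < n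
  · simp [hm]
  · simp [hm, h m (by omega)]

lemma prod_desc (n : ℕ) : ∏ i ∈ Finset.range n, ((n:ℝ) - i) = n.factorial := by
  induction n with
  | zero => simp
  | succ m ih =>
    rw [Finset.prod_range_succ']
    rw [Finset.prod_congr rfl (fun i _ => by push_cast; ring :
      ∀ i ∈ Finset.range m, (((m+1:ℕ):ℝ) - ((i+1:ℕ):ℝ)) = ((m:ℝ) - i))]
    rw [ih, Nat.factorial_succ]
    push_cast
    ring

lemma J_L_sq (n : ℕ) :
    J (Polynomial.X * LL n * LL n) = (n.factorial : ℝ) * ((n+1).factorial : ℝ) := by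
  set D := LL n - Polynomial.C ((-1:ℝ)^n) * Polynomial.X^n with hD
  have hcoeff : ∀ k, n ≤ k → D.coeff k = 0 := by
    intro k hk
    rw [hD, Polynomial.coeff_sub, Polynomial.coeff_C_mul, Polynomial.coeff_X_pow]
    rcases eq_or_lt_of_le hk with h | h
    · rw [← h, if_pos rfl, LL_coeff n]
      ring
    · rw [if_neg (by omega),
        Polynomial.coeff_eq_zero_of_natDegree_lt (lt_of_le_of_lt (LL_natDegree n) h)]
      ring
  have hrep := rep D n hcoeff
  have h2 : Polynomial.X * LL n * D =
      ∑ i ∈ Finset.range n, Polynomial.C (D.coeff i) * (Polynomial.X^(i+1) * LL n) := by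
    conv_lhs => rw [hrep]
    rw [Finset.mul_sum]
    exact Finset.sum_congr rfl (fun i _ => by ring)
  have split : Polynomial.X * LL n * LL n =
      Polynomial.C ((-1:ℝ)^n) * (Polynomial.X^(n+1) * LL n) + Polynomial.X * LL n * D := by
    rw [hD]; ring
  rw [split, h2, J_add, J_Cmul, J_sum, moment n n]
  have hz : ∀ i ∈ Finset.range n,
      J (Polynomial.C (D.coeff i) * (Polynomial.X^(i+1) * LL n)) = 0 := by
    intro i hi
    rw [J_Cmul, moment n i, FF_zero (Finset.mem_range.1 hi), mul_zero]
  rw [Finset.sum_congr rfl hz, Finset.sum_const, smul_zero, add_zero]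
  unfold FF
  rw [prod_desc]
  have hone : ((-1:ℝ))^n * (-1:ℝ)^n = 1 := by
    rw [← pow_add, ← two_mul, pow_mul]
    norm_num
  calc (-1:ℝ)^n * ((-1)^n * (n+1).factorial * n.factorial)
      = ((-1:ℝ)^n * (-1)^n) * ((n+1).factorial * n.factorial) := by ring
    _ = (n.factorial : ℝ) * ((n+1).factorial : ℝ) := by rw [hone]; ring

noncomputable def G (P : Polynomial ℝ) : ℝ :=
  ∫ t in Ioi (0:ℝ), P.eval t * Real.exp (-t) / (1 + t)

lemma intOn_G (P : Polynomial ℝ) :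
    IntegrableOn (fun t : ℝ => P.eval t * Real.exp (-t) / (1 + t)) (Ioi 0) := by
  refine Integrable.mono (intOn_poly P) ?_ ?_
  · have hm : Measurable fun t : ℝ => P.eval t * Real.exp (-t) / (1 + t) :=
      ((P.continuous.mul (Real.continuous_exp.comp continuous_neg)).measurable).div
        ((continuous_const.add continuous_id).measurable)
    exact hm.aestronglyMeasurable
  · rw [ae_restrict_iff' measurableSet_Ioi]
    refine Filter.Eventually.of_forall (fun t ht => ?_)
    have h1 : (1:ℝ) ≤ 1 + t := by simp at ht; linarith
    rw [Real.norm_eq_abs, Real.norm_eq_abs, abs_div]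
    rw [abs_of_nonneg (by linarith : (0:ℝ) ≤ 1 + t)]
    exact div_le_self (abs_nonneg _) h1

lemma G_add (P Q : Polynomial ℝ) : G (P + Q) = G P + G Q := by
  unfold G
  rw [← integral_add (intOn_G P) (intOn_G Q)]
  exact setIntegral_congr_fun measurableSet_Ioi (fun x _ => by simp; ring)

lemma G_Cmul (c : ℝ) (P : Polynomial ℝ) : G (Polynomial.C c * P) = c * G P := by
  unfold G
  rw [← integral_const_mul]
  exact setIntegral_congr_fun measurableSet_Ioi (fun x _ => by simp; ring)

lemma G_sub (P Q : Polynomial ℝ) : G (P - Q) = G P - G Q := by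
  have h : P - Q = P + Polynomial.C (-1) * Q := by
    rw [Polynomial.C_neg, Polynomial.C_1]
    ring
  rw [h, G_add, G_Cmul]
  ring

lemma G_cancel (P : Polynomial ℝ) : G ((1 + Polynomial.X) * P) = J P := by
  unfold G J
  refine setIntegral_congr_fun measurableSet_Ioi (fun x hx => ?_)
  have h1 : (0:ℝ) < 1 + x := by simp at hx; linarith
  simp only [Polynomial.eval_mul, Polynomial.eval_add, Polynomial.eval_one, Polynomial.eval_X]
  field_simp

lemma G_bound (P : Polynomial ℝ) (c : ℝ) (hc : 0 < c) :
    |G (Polynomial.X * P)| ≤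
      (1/(2*c)) * J (Polynomial.X * P * P) + (c/2) * J (Polynomial.X) := by
  unfold G J
  have step1 : |∫ t in Ioi (0:ℝ), (Polynomial.X * P).eval t * Real.exp (-t) / (1 + t)| ≤
      ∫ t in Ioi (0:ℝ), |(Polynomial.X * P).eval t * Real.exp (-t) / (1 + t)| := by
    rw [← Real.norm_eq_abs]
    refine le_trans (norm_integral_le_integral_norm _) ?_
    simp only [Real.norm_eq_abs]
    exact le_rfl
  refine le_trans step1 ?_
  have step2 : (∫ t in Ioi (0:ℝ), |(Polynomial.X * P).eval t * Real.exp (-t) / (1 + t)|) ≤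
      ∫ t in Ioi (0:ℝ), ((1/(2*c)) * ((Polynomial.X * P * P).eval t * Real.exp (-t))
        + (c/2) * ((Polynomial.X : Polynomial ℝ).eval t * Real.exp (-t))) := by
    refine setIntegral_mono_on ((intOn_G _).abs) ?_ measurableSet_Ioi ?_
    · exact ((intOn_poly _).const_mul _).add ((intOn_poly _).const_mul _)
    · intro x hx
      have hx0 : (0:ℝ) < x := hx
      have h1x : (1:ℝ) ≤ 1 + x := by linarith
      have he : (0:ℝ) < Real.exp (-x) := Real.exp_pos _
      simp only [Polynomial.eval_mul, Polynomial.eval_X]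
      set v := P.eval x with hv
      have habs : |x * v * Real.exp (-x) / (1 + x)| ≤ x * |v| * Real.exp (-x) := by
        rw [abs_div, abs_of_nonneg (by linarith : (0:ℝ) ≤ 1 + x)]
        refine le_trans (div_le_self (abs_nonneg _) h1x) ?_
        rw [abs_mul, abs_mul, abs_of_pos hx0, abs_of_pos he]
      refine le_trans habs ?_
      have key : (0:ℝ) ≤ (x * Real.exp (-x) / (2*c)) * (|v| - c)^2 := by positivity
      have hsq2 : (|v| - c)^2 = v*v - 2*c*|v| + c^2 := by
        rw [sub_sq, sq_abs]
        ring
      have expand : (x * Real.exp (-x) / (2*c)) * (|v| - c)^2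
          = 1/(2*c) * (x * v * v * Real.exp (-x)) + c/2 * (x * Real.exp (-x))
            - x * |v| * Real.exp (-x) := by
        rw [hsq2]
        field_simp
        ring
      linarith [key, expand.symm.trans_le (le_of_eq rfl)]
  refine le_trans step2 ?_
  rw [integral_add (((intOn_poly _).const_mul _)) (((intOn_poly _).const_mul _)),
    integral_const_mul, integral_const_mul]

end CFaux

theorem stmt_3 
    (a b p q : ℕ → ℝ)
    (ha0 : a 0 = 1)
    (ha : ∀ n : ℕ, a n = 2 * (n : ℝ) + 1)
    (hb0 : b 0 = -1)
    (hb : ∀ n : ℕ, 1 ≤ n → b n = -((n : ℝ) * ((n : ℝ) + 1)))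
    (hp0 : p 0 = a 0) (hq0 : q 0 = 1)
    (hp1 : p 1 = a 0 * a 1 + b 0) (hq1 : q 1 = a 1)
    (hp : ∀ n : ℕ, p (n + 2) = a (n + 2) * p (n + 1) + b (n + 1) * p n)
    (hq : ∀ n : ℕ, q (n + 2) = a (n + 2) * q (n + 1) + b (n + 1) * q n) :
    Tendsto (fun n => p n / q n) atTop (𝓝 (∫ t in Set.Ioi (0 : ℝ), Real.exp (-t) / (1 + t))) := by
  classical
  set S : ℝ := ∫ t in Set.Ioi (0:ℝ), Real.exp (-t) / (1 + t) with hSdef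
  have hS1 : CFaux.G 1 = S := by
    rw [hSdef]
    unfold CFaux.G
    exact setIntegral_congr_fun measurableSet_Ioi (fun x _ => by simp)
  have hJ1 : CFaux.J 1 = 1 := by
    have h := CFaux.J_pow 0
    simpa using h
  have hJX : CFaux.J Polynomial.X = 1 := by
    have h := CFaux.J_pow 1
    simpa using h
  have hGX : CFaux.G Polynomial.X = 1 - S := by
    have h := CFaux.G_cancel 1
    rw [mul_one, CFaux.G_add 1 Polynomial.X, hS1, hJ1] at h
    linarith
  have hGX2 : CFaux.G (Polynomial.X^2) = S := by
    have h := CFaux.G_cancel Polynomial.X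
    have hexp : (1 + Polynomial.X) * Polynomial.X
        = Polynomial.X + (Polynomial.X:Polynomial ℝ)^2 := by ring
    rw [hexp, CFaux.G_add, hGX, hJX] at h
    linarith
  set E : ℕ → ℝ := fun n => -CFaux.G (Polynomial.X * CFaux.LL n) with hE
  have hE0 : E 0 = S - 1 := by
    simp only [hE]
    have h : Polynomial.X * CFaux.LL 0 = Polynomial.X := by
      simp [CFaux.LL]
    rw [h, hGX]; ring
  have hE1 : E 1 = 3*S - 2 := by
    simp only [hE]
    have hid : Polynomial.X * CFaux.LL 1
        = Polynomial.C 2 * Polynomial.X - Polynomial.X^2 := by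
      simp only [CFaux.LL]; ring
    rw [hid, CFaux.G_sub, CFaux.G_Cmul, hGX, hGX2]; ring
  have hJXL : ∀ m : ℕ, 1 ≤ m → CFaux.J (Polynomial.X * CFaux.LL m) = 0 := by
    intro m hm
    have h := CFaux.moment m 0
    rw [zero_add, pow_one] at h
    rw [h]
    exact CFaux.FF_zero (by omega)
  have hErec : ∀ n : ℕ, E (n+2) = (2*(n:ℝ)+5) * E (n+1) - ((n:ℝ)+1)*((n:ℝ)+2) * E n := by
    intro n
    have hC5 : Polynomial.C (2*(n:ℝ)+5) = Polynomial.C (2*(n:ℝ)+4) + 1 := by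
      rw [show (2*(n:ℝ)+5) = (2*(n:ℝ)+4) + 1 by ring, Polynomial.C_add, Polynomial.C_1]
    have hid : Polynomial.X * CFaux.LL (n+2) =
        Polynomial.C (2*(n:ℝ)+5) * (Polynomial.X * CFaux.LL (n+1))
          - Polynomial.C (((n:ℝ)+1)*((n:ℝ)+2)) * (Polynomial.X * CFaux.LL n)
          - (1 + Polynomial.X) * (Polynomial.X * CFaux.LL (n+1)) := by
      rw [hC5]
      simp only [CFaux.LL]; ring
    simp only [hE]
    rw [hid, CFaux.G_sub, CFaux.G_sub, CFaux.G_Cmul, CFaux.G_Cmul, CFaux.G_cancel,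
      hJXL (n+1) (by omega)]
    ring
  have hab : ∀ n : ℕ, a (n+2) = 2*(n:ℝ)+5 := by
    intro n; rw [ha (n+2)]; push_cast; ring
  have hbb : ∀ n : ℕ, b (n+1) = -(((n:ℝ)+1)*((n:ℝ)+2)) := by
    intro n; rw [hb (n+1) (by omega)]; push_cast; ring
  have key : ∀ n : ℕ, q n * S - p n = E n ∧ q (n+1) * S - p (n+1) = E (n+1) := by
    intro n
    induction n with
    | zero =>
      constructor
      · rw [hq0, hp0, ha0, hE0]; ring
      · have ha1 : a 1 = 3 := by rw [ha 1]; norm_num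
        rw [hq1, hp1, ha0, ha1, hb0, hE1]; ring
    | succ m ih =>
      refine ⟨ih.2, ?_⟩
      rw [hq m, hp m, hab m, hbb m, hErec m]
      linear_combination (2*(m:ℝ)+5) * ih.2 - (((m:ℝ)+1)*((m:ℝ)+2)) * ih.1
  have hqlb : ∀ n : ℕ, (((n+1).factorial : ℝ) ≤ q n) ∧ ((n:ℝ)+2) * q n ≤ q (n+1) := by
    intro n
    induction n with
    | zero =>
      constructor
      · rw [hq0]; norm_num
      · rw [hq0, hq1, ha 1]; norm_num
    | succ m ih =>
      have hqmpos : (0:ℝ) < q m := lt_of_lt_of_le (by positivity) ih.1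
      have hqm1pos : (0:ℝ) < q (m+1) :=
        lt_of_lt_of_le (mul_pos (by positivity : (0:ℝ) < (m:ℝ)+2) hqmpos) ih.2
      constructor
      · have hf : (((m+1+1).factorial : ℕ) : ℝ) = ((m:ℝ)+2) * ((m+1).factorial : ℝ) := by
          rw [Nat.factorial_succ]; push_cast; ring
        rw [hf]
        calc ((m:ℝ)+2) * ((m+1).factorial : ℝ) ≤ ((m:ℝ)+2) * q m :=
              mul_le_mul_of_nonneg_left ih.1 (by positivity)
          _ ≤ q (m+1) := ih.2
      · rw [hq m, hab m, hbb m]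
        push_cast
        nlinarith [ih.2, hqm1pos,
          mul_le_mul_of_nonneg_left ih.2 (by positivity : (0:ℝ) ≤ (m:ℝ)+1)]
  have hqpos : ∀ n : ℕ, (0:ℝ) < q n := fun n => lt_of_lt_of_le (by positivity) (hqlb n).1
  have hEbound : ∀ n : ℕ,
      |E n| ≤ Real.sqrt ((n.factorial : ℝ) * ((n+1).factorial : ℝ)) := by
    intro n
    set c := Real.sqrt ((n.factorial : ℝ) * ((n+1).factorial : ℝ)) with hc
    have hcpos : 0 < c := Real.sqrt_pos.2 (by positivity)
    have hb2 := CFaux.G_bound (CFaux.LL n) c hcpos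
    rw [CFaux.J_L_sq n, hJX] at hb2
    have hc2 : c * c = (n.factorial : ℝ) * ((n+1).factorial : ℝ) :=
      Real.mul_self_sqrt (by positivity)
    have heq : (1/(2*c)) * ((n.factorial : ℝ) * ((n+1).factorial : ℝ)) + (c/2) * 1 = c := by
      rw [← hc2]; field_simp; ring
    rw [heq] at hb2
    simpa [hE, abs_neg] using hb2
  have hfrac : ∀ n : ℕ, p n / q n = S - E n / q n := by
    intro n
    have hqne := ne_of_gt (hqpos n)
    rw [show p n = q n * S - E n from by linarith [(key n).1], sub_div, mul_comm,
      mul_div_assoc, div_self hqne, mul_one]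
  have hratio : ∀ n : ℕ, ‖E n / q n‖ ≤ 1 / Real.sqrt ((n:ℝ)+1) := by
    intro n
    have h1 : |E n / q n| = |E n| / q n := by
      rw [abs_div, abs_of_pos (hqpos n)]
    rw [Real.norm_eq_abs, h1]
    have hsqne : Real.sqrt ((n:ℝ)+1) ≠ 0 := ne_of_gt (Real.sqrt_pos.2 (by positivity))
    have hsq : Real.sqrt ((n.factorial : ℝ) * ((n+1).factorial : ℝ))
        = ((n+1).factorial : ℝ) / Real.sqrt ((n:ℝ)+1) := by
      rw [eq_div_iff hsqne, ← Real.sqrt_mul (by positivity)]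
      have harg : (n.factorial : ℝ) * ((n+1).factorial : ℝ) * ((n:ℝ)+1)
          = (((n+1).factorial : ℝ))^2 := by
        rw [Nat.factorial_succ]; push_cast; ring
      rw [harg, Real.sqrt_sq (by positivity)]
    calc |E n| / q n
        ≤ Real.sqrt ((n.factorial : ℝ) * ((n+1).factorial : ℝ)) / ((n+1).factorial : ℝ) :=
          div_le_div₀ (Real.sqrt_nonneg _) (hEbound n) (by positivity) (hqlb n).1
      _ = 1 / Real.sqrt ((n:ℝ)+1) := by
          rw [hsq]
          have hA : (((n+1).factorial : ℕ) : ℝ) ≠ 0 := by positivity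
          field_simp
  have hlim0 : Tendsto (fun n : ℕ => E n / q n) atTop (𝓝 0) := by
    refine squeeze_zero_norm hratio ?_
    have h1 : Tendsto (fun n : ℕ => ((n:ℝ)+1)) atTop atTop :=
      tendsto_atTop_add_const_right _ 1 tendsto_natCast_atTop_atTop
    have h2 : Tendsto (fun n : ℕ => Real.sqrt ((n:ℝ)+1)) atTop atTop := by
      refine tendsto_atTop_atTop.2 (fun c => ?_)
      refine ⟨Nat.ceil (c^2), fun n hn => ?_⟩
      have hcc : c^2 ≤ (n:ℝ) := le_trans (Nat.le_ceil _) (by exact_mod_cast hn)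
      calc c ≤ Real.sqrt (c^2) := by
            rw [Real.sqrt_sq_eq_abs]; exact le_abs_self c
        _ ≤ Real.sqrt ((n:ℝ)+1) := Real.sqrt_le_sqrt (by linarith)
    exact h2.inv_tendsto_atTop.congr (fun n => by simp [one_div, Pi.inv_apply])
  have hfin : Tendsto (fun n : ℕ => S - E n / q n) atTop (𝓝 (S - 0)) :=
    tendsto_const_nhds.sub hlim0
  rw [sub_zero] at hfin
  exact Tendsto.congr (fun n => (hfrac n).symm) hfin
end

section
/- Define a(0) = 0 and a(n) = 3(2n−1) for n ≥ 1, and b(0) = 2 and b(n) = −n² for n ≥ 1. Then the convergents p(n)/q(n) of the continued fraction with partial quotients (a(n), b(n)) converge to log(2) as n → ∞; that is, log(2) = 2/(3 − 1²/(9 − 2²/(15 − 3²/(21 − ⋯)))). -/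
open Filter Topology intervalIntegral MeasureTheory

private noncomputable def Jcf (n : ℕ) : ℝ := ∫ x in (0:ℝ)..1, (x*(1-x))^n / (1+x)^(n+1)

private lemma Jint (n : ℕ) : IntervalIntegrable (fun x : ℝ => (x*(1-x))^n / (1+x)^(n+1))
    MeasureTheory.volume 0 1 := by
  apply ContinuousOn.intervalIntegrable
  apply ContinuousOn.div (by fun_prop) (by fun_prop)
  intro x hx
  rw [Set.uIcc_of_le (by norm_num : (0:ℝ) ≤ 1)] at hx
  have : (0:ℝ) < 1 + x := by linarith [hx.1]
  positivity

private lemma J0 : Jcf 0 = Real.log 2 := by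
  have h : Jcf 0 = ∫ x in (0:ℝ)..1, (1+x)⁻¹ := by
    unfold Jcf; congr 1; ext x; simp
  rw [h]
  have h2 := intervalIntegral.integral_comp_add_left (a := (0:ℝ)) (b := 1) (fun x => x⁻¹) 1
  rw [h2]
  have h3 : (0:ℝ) ∉ Set.uIcc (1+0:ℝ) (1+1) := by
    rw [Set.uIcc_of_le] <;> norm_num
  rw [integral_inv h3]
  norm_num

private lemma J1 : Jcf 1 = 3 * Real.log 2 - 2 := by
  have key : ∀ x ∈ Set.uIcc (0:ℝ) 1,
      HasDerivAt (fun y : ℝ => -y + 3*Real.log (1+y) + 2/(1+y))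
        ((x*(1-x))^1 / (1+x)^(1+1)) x := by
    intro x hx
    rw [Set.uIcc_of_le (by norm_num : (0:ℝ) ≤ 1)] at hx
    have hx0 : (0:ℝ) < 1 + x := by linarith [hx.1]
    have h1 : HasDerivAt (fun y : ℝ => 1 + y) 1 x := (hasDerivAt_id x).const_add 1
    have h2 : HasDerivAt (fun y : ℝ => Real.log (1+y)) (1/(1+x)) x := by
      simpa using h1.log hx0.ne'
    have h3 : HasDerivAt (fun y : ℝ => 2/(1+y)) (-2/(1+x)^2) x := by
      have := (h1.inv hx0.ne').const_mul 2
      simpa [div_eq_mul_inv, neg_div, mul_comm] using this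
    have h4 : HasDerivAt (fun y : ℝ => -y) (-1) x := (hasDerivAt_id x).neg
    have := (h4.fun_add (h2.const_mul 3)).fun_add h3
    refine this.congr_deriv ?_
    field_simp
    ring
  rw [Jcf, intervalIntegral.integral_eq_sub_of_hasDerivAt key (Jint 1)]
  norm_num [Real.log_one]

private lemma derivId (n : ℕ) (x : ℝ) (hx0 : (0:ℝ) < 1 + x) :
    HasDerivAt (fun y : ℝ => y^(n+1)*(1-y)^(n+1)*(1-2*y-y^2)/(1+y)^(n+2))
      (((n:ℝ)+2) * ((x*(1-x))^(n+2)/(1+x)^(n+3))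
        - 3*(2*(n:ℝ)+3) * ((x*(1-x))^(n+1)/(1+x)^(n+2))
        + ((n:ℝ)+1) * ((x*(1-x))^n/(1+x)^(n+1))) x := by
  have hxne : (1:ℝ) + x ≠ 0 := hx0.ne'
  have hD : HasDerivAt (fun y : ℝ => (1+y)^(n+2))
      ((n+2:ℕ) * (1+x)^(n+1) * 1) x := by
    have h1 : HasDerivAt (fun y : ℝ => 1 + y) 1 x := (hasDerivAt_id x).const_add 1
    simpa using h1.fun_pow (n+2)
  have hN1 : HasDerivAt (fun y : ℝ => y^(n+1)) ((n+1:ℕ) * x^n * 1) x := by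
    simpa using (hasDerivAt_id x).fun_pow (n+1)
  have hN2 : HasDerivAt (fun y : ℝ => (1-y)^(n+1)) ((n+1:ℕ) * (1-x)^n * (-1)) x := by
    have h1 : HasDerivAt (fun y : ℝ => 1 - y) (-1) x := by
      exact (hasDerivAt_id x).const_sub 1
    simpa using h1.fun_pow (n+1)
  have hN3 : HasDerivAt (fun y : ℝ => 1-2*y-y^2) (-2 - 2*x) x := by
    have := (((hasDerivAt_id x).const_mul 2).const_sub 1).fun_sub
      ((hasDerivAt_id x).fun_pow 2)
    refine this.congr_deriv ?_
    norm_num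
  have hN := (hN1.fun_mul hN2).fun_mul hN3
  have hG := hN.fun_div hD (pow_ne_zero _ hxne)
  refine hG.congr_deriv ?_
  simp only [mul_pow]
  field_simp
  push_cast
  ring

private lemma Jrec (n : ℕ) :
    ((n:ℝ)+2) * Jcf (n+2) = 3*(2*(n:ℝ)+3) * Jcf (n+1) - ((n:ℝ)+1) * Jcf n := by
  have hint : ∀ m : ℕ, IntervalIntegrable
      (fun x : ℝ => (x*(1-x))^m / (1+x)^(m+1)) MeasureTheory.volume 0 1 := Jint
  have key : (∫ x in (0:ℝ)..1,
      (((n:ℝ)+2) * ((x*(1-x))^(n+2)/(1+x)^(n+3))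
        - 3*(2*(n:ℝ)+3) * ((x*(1-x))^(n+1)/(1+x)^(n+2))
        + ((n:ℝ)+1) * ((x*(1-x))^n/(1+x)^(n+1)))) = 0 := by
    rw [intervalIntegral.integral_eq_sub_of_hasDerivAt (fun x hx => by
      rw [Set.uIcc_of_le (by norm_num : (0:ℝ) ≤ 1)] at hx
      exact derivId n x (by linarith [hx.1]))
      (((((hint (n+2)).const_mul _).sub ((hint (n+1)).const_mul _)).add
        ((hint n).const_mul _)))]
    norm_num
  rw [intervalIntegral.integral_add (((hint (n+2)).const_mul _).sub ((hint (n+1)).const_mul _))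
      ((hint n).const_mul _),
    intervalIntegral.integral_sub ((hint (n+2)).const_mul _) ((hint (n+1)).const_mul _),
    intervalIntegral.integral_const_mul, intervalIntegral.integral_const_mul,
    intervalIntegral.integral_const_mul] at key
  unfold Jcf
  linarith [key]

private lemma Jbound (n : ℕ) : |Jcf n| ≤ (1/4:ℝ)^n := by
  have h := intervalIntegral.norm_integral_le_of_norm_le_const
    (a := (0:ℝ)) (b := 1) (C := (1/4:ℝ)^n)
    (f := fun x : ℝ => (x*(1-x))^n / (1+x)^(n+1)) ?_
  · simpa [Jcf] using h
  · intro x hx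
    rw [Set.uIoc_of_le (by norm_num : (0:ℝ) ≤ 1)] at hx
    obtain ⟨h1, h2⟩ := hx
    have hu : 0 ≤ x*(1-x) := by nlinarith
    have hd : (1:ℝ) ≤ (1+x)^(n+1) := one_le_pow₀ (by linarith)
    rw [Real.norm_eq_abs, abs_of_nonneg (by positivity)]
    calc (x*(1-x))^n / (1+x)^(n+1) ≤ (x*(1-x))^n := by
          apply div_le_self (by positivity) hd
      _ ≤ (1/4:ℝ)^n := pow_le_pow_left₀ hu (by nlinarith [sq_nonneg (x-1/2)]) n

theorem stmt_4 
    (a b p q : ℕ → ℝ)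
    (ha0 : a 0 = 0)
    (ha : ∀ n : ℕ, 1 ≤ n → a n = 3 * (2 * (n : ℝ) - 1))
    (hb0 : b 0 = 2)
    (hb : ∀ n : ℕ, 1 ≤ n → b n = -(n : ℝ) ^ 2)
    (hp0 : p 0 = a 0) (hq0 : q 0 = 1)
    (hp1 : p 1 = a 0 * a 1 + b 0) (hq1 : q 1 = a 1)
    (hp : ∀ n : ℕ, p (n + 2) = a (n + 2) * p (n + 1) + b (n + 1) * p n)
    (hq : ∀ n : ℕ, q (n + 2) = a (n + 2) * q (n + 1) + b (n + 1) * q n) :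
    Tendsto (fun n => p n / q n) atTop (𝓝 (Real.log 2)) := by
  set L := Real.log 2 with hL
  have ha1 : a 1 = 3 := by rw [ha 1 le_rfl]; norm_num
  -- the key identity  p n = q n * L - n! * Jcf n
  have key2 : ∀ n : ℕ, (p n = q n * L - n.factorial * Jcf n) ∧
      (p (n+1) = q (n+1) * L - (n+1).factorial * Jcf (n+1)) := by
    intro n
    induction n with
    | zero =>
      constructor
      · rw [hp0, ha0, hq0, J0]; simp [hL]
      · rw [hp1, ha0, hq1, ha1, hb0, J1]; norm_num [Nat.factorial, hL]
    | succ n ih =>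
      refine ⟨ih.2, ?_⟩
      have e := hp n
      rw [ha (n+2) (by omega), hb (n+1) (by omega), ih.1, ih.2] at e
      have eq := hq n
      rw [ha (n+2) (by omega), hb (n+1) (by omega)] at eq
      have jr := Jrec n
      rw [e, eq]
      have hf2 : ((n+2).factorial : ℝ) = ((n:ℝ)+2) * ((n:ℝ)+1) * (n.factorial : ℝ) := by
        rw [Nat.factorial_succ, Nat.factorial_succ]; push_cast; ring
      have hf1 : ((n+1).factorial : ℝ) = ((n:ℝ)+1) * (n.factorial : ℝ) := by
        rw [Nat.factorial_succ]; push_cast; ring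
      rw [hf2, hf1]
      push_cast
      linear_combination (((n:ℝ)+1) * (n.factorial : ℝ)) * jr
  have key : ∀ n : ℕ, p n = q n * L - n.factorial * Jcf n := fun n => (key2 n).1
  -- lower bounds on q
  have qlb : ∀ n : ℕ, ((3:ℝ)^n * n.factorial ≤ q n) ∧ (3*((n:ℝ)+1) * q n ≤ q (n+1)) := by
    intro n
    induction n with
    | zero =>
      rw [hq0, hq1, ha1]
      norm_num [Nat.factorial]
    | succ n ih =>
      have hqpos : 0 < q n := lt_of_lt_of_le (by positivity) ih.1
      have h1 : (3:ℝ)^(n+1) * (n+1).factorial ≤ q (n+1) := by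
        have h0 := mul_le_mul_of_nonneg_left ih.1
          (show (0:ℝ) ≤ 3*((n:ℝ)+1) by positivity)
        rw [Nat.factorial_succ]
        push_cast
        rw [pow_succ]
        nlinarith [ih.2, h0]
      refine ⟨h1, ?_⟩
      have eq := hq n
      rw [ha (n+2) (by omega), hb (n+1) (by omega)] at eq
      push_cast at eq
      have h2 := mul_le_mul_of_nonneg_left ih.2 (show (0:ℝ) ≤ 3*(n:ℝ)+3 by positivity)
      have hnn : (0:ℝ) ≤ ((n:ℝ)+1)^2 * q n :=
        mul_nonneg (by positivity) hqpos.le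
      push_cast
      show 3*((n:ℝ)+1+1) * q (n+1) ≤ q (n+2)
      nlinarith [eq, h2, hnn]
  have hqpos : ∀ n : ℕ, 0 < q n := fun n => lt_of_lt_of_le (by positivity) (qlb n).1
  -- rewrite p n / q n
  have heq : ∀ n : ℕ, p n / q n = L - ((n.factorial : ℝ) * Jcf n) / q n := by
    intro n
    rw [key n, sub_div, mul_comm, mul_div_assoc, div_self (hqpos n).ne', mul_one]
  -- the error term tends to zero
  have herr : Tendsto (fun n : ℕ => ((n.factorial : ℝ) * Jcf n) / q n) atTop (𝓝 0) := by
    have hbnd : ∀ n : ℕ, ‖((n.factorial : ℝ) * Jcf n) / q n‖ ≤ (1/12:ℝ)^n := by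
      intro n
      have hfpos : (0:ℝ) < (n.factorial : ℝ) := by positivity
      rw [Real.norm_eq_abs, abs_div, abs_of_pos (hqpos n), abs_mul,
        abs_of_pos hfpos]
      have hnum : (n.factorial : ℝ) * |Jcf n| ≤ (n.factorial : ℝ) * (1/4:ℝ)^n :=
        mul_le_mul_of_nonneg_left (Jbound n) hfpos.le
      have h12 : ((n.factorial : ℝ) * (1/4:ℝ)^n) / ((3:ℝ)^n * n.factorial) = (1/12:ℝ)^n := by
        rw [mul_comm ((3:ℝ)^n) _, mul_div_mul_left _ _ hfpos.ne']
        rw [div_pow, div_pow, div_div]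
        norm_num
        rw [← mul_inv, ← mul_pow]
        norm_num
      calc (n.factorial : ℝ) * |Jcf n| / q n
          ≤ ((n.factorial : ℝ) * (1/4:ℝ)^n) / ((3:ℝ)^n * n.factorial) := by
            apply div_le_div₀ (by positivity) hnum (by positivity) (qlb n).1
        _ = (1/12:ℝ)^n := h12
    exact squeeze_zero_norm hbnd
      (tendsto_pow_atTop_nhds_zero_of_lt_one (by norm_num) (by norm_num))
  have := tendsto_const_nhds (x := L) (f := atTop (α := ℕ)) |>.sub herr
  rw [sub_zero] at this
  exact this.congr (fun n => (heq n).symm)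
end

section
/- Define a(0) = 4, a(1) = 4, and a(n) = 2n+1 for n ≥ 2, and b(0) = −4 and b(n) = (n+1)² for n ≥ 1. Then the convergents p(n)/q(n) of the continued fraction with partial quotients (a(n), b(n)) converge to π as n → ∞; that is, π = 4 − 4/(4 + 2²/(5 + 3²/(7 + 4²/(9 + ⋯)))). -/
open MeasureTheory Filter Topology Set Real

noncomputable def cfW (θ : ℝ) : ℝ := 1 + Real.sqrt 2 * Real.cosh θ

lemma cfW_ge_two (θ : ℝ) : 2 ≤ cfW θ := by
  have h1 : (1:ℝ) ≤ Real.sqrt 2 := by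
    nlinarith [Real.sq_sqrt (by norm_num : (2:ℝ) ≥ 0), Real.sqrt_nonneg 2]
  have h2 := Real.one_le_cosh θ
  unfold cfW; nlinarith

lemma cfW_pos (θ : ℝ) : 0 < cfW θ := lt_of_lt_of_le (by norm_num) (cfW_ge_two θ)

lemma cfW_continuous : Continuous cfW := by
  unfold cfW; continuity

lemma cfW_hasDerivAt (θ : ℝ) : HasDerivAt cfW (Real.sqrt 2 * Real.sinh θ) θ := by
  exact ((Real.hasDerivAt_cosh θ).const_mul (Real.sqrt 2)).const_add 1

lemma cfW_inv_le (θ : ℝ) : (cfW θ)⁻¹ ≤ Real.sqrt 2 * Real.exp (-θ) := by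
  have hc : Real.cosh θ = (Real.exp θ + Real.exp (-θ))/2 := Real.cosh_eq θ
  have h1 : (1:ℝ) ≤ Real.sqrt 2 := by
    nlinarith [Real.sq_sqrt (by norm_num : (2:ℝ) ≥ 0), Real.sqrt_nonneg 2]
  have hw : Real.sqrt 2 * (Real.exp θ / 2) ≤ cfW θ := by
    unfold cfW
    rw [hc]
    nlinarith [Real.exp_pos (-θ), Real.exp_pos θ]
  have hpos : 0 < Real.sqrt 2 * (Real.exp θ / 2) := by positivity
  have := inv_anti₀ hpos hw
  calc (cfW θ)⁻¹ ≤ (Real.sqrt 2 * (Real.exp θ / 2))⁻¹ := this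
    _ = Real.sqrt 2 * Real.exp (-θ) := by
        rw [Real.exp_neg]
        have h2 : Real.sqrt 2 * Real.sqrt 2 = 2 :=
          Real.mul_self_sqrt (by norm_num)
        have he := (Real.exp_pos θ).ne'
        field_simp
        linear_combination (-1:ℝ) * h2

lemma cfW_pow_inv_le (θ : ℝ) {m : ℕ} (hm : 1 ≤ m) : ((cfW θ)^m)⁻¹ ≤ (cfW θ)⁻¹ := by
  apply inv_anti₀ (cfW_pos θ)
  exact le_self_pow₀ (le_trans (by norm_num) (cfW_ge_two θ)) (by omega)

lemma cf_integrable {m : ℕ} (hm : 1 ≤ m) :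
    IntegrableOn (fun θ => ((cfW θ)^m)⁻¹) (Ioi (0:ℝ)) := by
  have hg : IntegrableOn (fun θ => Real.sqrt 2 * Real.exp (-θ)) (Ioi (0:ℝ)) := by
    have := (exp_neg_integrableOn_Ioi (0:ℝ) (by norm_num : (0:ℝ) < 1))
    simpa [IntegrableOn] using this.const_mul (Real.sqrt 2)
  apply Integrable.mono' hg
  · exact ((cfW_continuous.pow m).inv₀ (fun x => pow_ne_zero m (cfW_pos x).ne')).aestronglyMeasurable.restrict
  · filter_upwards with θ
    rw [Real.norm_eq_abs, abs_of_nonneg (inv_nonneg.mpr (pow_nonneg (cfW_pos θ).le m))]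
    exact le_trans (cfW_pow_inv_le θ hm) (cfW_inv_le θ)

noncomputable def cfC (m : ℕ) : ℝ := ∫ θ in Ioi (0:ℝ), ((cfW θ)^m)⁻¹

lemma cfC_nonneg (m : ℕ) : 0 ≤ cfC m :=
  integral_nonneg (fun θ => inv_nonneg.mpr (pow_nonneg (cfW_pos θ).le m))

set_option maxHeartbeats 1000000

lemma sqrt2_sq : Real.sqrt 2 * Real.sqrt 2 = 2 := Real.mul_self_sqrt (by norm_num)
lemma sqrt2_pos : (0:ℝ) < Real.sqrt 2 := Real.sqrt_pos.mpr (by norm_num)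

lemma cfW_tendsto_atTop : Tendsto cfW atTop atTop := by
  have hcosh : Tendsto Real.cosh atTop atTop := by
    apply tendsto_atTop_mono (fun x => ?_)
      (Real.tendsto_exp_atTop.atTop_div_const (by norm_num : (0:ℝ) < 2))
    rw [Real.cosh_eq]
    have := (Real.exp_pos (-x)).le
    linarith
  unfold cfW
  exact tendsto_atTop_add_const_left _ 1 (hcosh.const_mul_atTop sqrt2_pos)

lemma cf_ratio_tendsto :
    Tendsto (fun θ => Real.sinh θ / (Real.cosh θ + Real.sqrt 2)) atTop (𝓝 1) := by
  have key : ∀ θ : ℝ, Real.sinh θ / (Real.cosh θ + Real.sqrt 2)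
      = (1 - Real.exp (-θ)^2) / (1 + Real.exp (-θ)^2 + 2 * Real.sqrt 2 * Real.exp (-θ)) := by
    intro θ
    have he := (Real.exp_pos θ).ne'
    have hne : Real.cosh θ + Real.sqrt 2 ≠ 0 := by
      have := Real.one_le_cosh θ; have := sqrt2_pos; positivity
    have hd : 1 + Real.exp (-θ)^2 + 2 * Real.sqrt 2 * Real.exp (-θ)
        = (Real.cosh θ + Real.sqrt 2) * (2 * Real.exp (-θ)) := by
      rw [Real.cosh_eq, Real.exp_neg]
      field_simp
    have hn : 1 - Real.exp (-θ)^2 = Real.sinh θ * (2 * Real.exp (-θ)) := by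
      rw [Real.sinh_eq, Real.exp_neg]
      field_simp
    rw [hd, hn, mul_div_mul_right _ _ (by positivity)]
  simp only [key]
  have h0 : Tendsto (fun θ : ℝ => Real.exp (-θ)) atTop (𝓝 0) :=
    Real.tendsto_exp_neg_atTop_nhds_zero
  have hnum : Tendsto (fun θ : ℝ => 1 - Real.exp (-θ)^2) atTop (𝓝 1) := by
    have : Tendsto (fun θ : ℝ => (1:ℝ) - Real.exp (-θ)^2) atTop (𝓝 (1 - 0^2)) :=
      tendsto_const_nhds.sub (h0.pow 2)
    simpa using this
  have hden : Tendsto (fun θ : ℝ => 1 + Real.exp (-θ)^2 + 2 * Real.sqrt 2 * Real.exp (-θ))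
      atTop (𝓝 1) := by
    have : Tendsto (fun θ : ℝ => (1:ℝ) + Real.exp (-θ)^2 + 2 * Real.sqrt 2 * Real.exp (-θ))
        atTop (𝓝 (1 + 0^2 + 2 * Real.sqrt 2 * 0)) :=
      (tendsto_const_nhds.add (h0.pow 2)).add (h0.const_mul _)
    simpa using this
  have := hnum.div hden one_ne_zero
  rw [div_one] at this; exact this

lemma cf_sw_tendsto :
    Tendsto (fun θ => Real.sqrt 2 * Real.sinh θ * (cfW θ)⁻¹) atTop (𝓝 1) := by
  have key : ∀ θ : ℝ, Real.sqrt 2 * Real.sinh θ * (cfW θ)⁻¹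
      = Real.sqrt 2 * (1 - Real.exp (-θ)^2) /
        (Real.sqrt 2 * (1 + Real.exp (-θ)^2) + 2 * Real.exp (-θ)) := by
    intro θ
    have he := (Real.exp_pos θ).ne'
    have hne := (cfW_pos θ).ne'
    have hd : Real.sqrt 2 * (1 + Real.exp (-θ)^2) + 2 * Real.exp (-θ)
        = cfW θ * (2 * Real.exp (-θ)) := by
      unfold cfW
      rw [Real.cosh_eq, Real.exp_neg]
      field_simp
      ring
    have hn : Real.sqrt 2 * (1 - Real.exp (-θ)^2)
        = Real.sqrt 2 * Real.sinh θ * (2 * Real.exp (-θ)) := by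
      rw [Real.sinh_eq, Real.exp_neg]
      field_simp
    have h2e : (2 * Real.exp (-θ)) ≠ 0 := by positivity
    rw [hd, hn, mul_div_mul_right _ _ h2e, div_eq_mul_inv]
  simp only [key]
  have h0 : Tendsto (fun θ : ℝ => Real.exp (-θ)) atTop (𝓝 0) :=
    Real.tendsto_exp_neg_atTop_nhds_zero
  have hnum : Tendsto (fun θ : ℝ => Real.sqrt 2 * (1 - Real.exp (-θ)^2)) atTop
      (𝓝 (Real.sqrt 2)) := by
    have : Tendsto (fun θ : ℝ => Real.sqrt 2 * ((1:ℝ) - Real.exp (-θ)^2)) atTop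
        (𝓝 (Real.sqrt 2 * (1 - 0^2))) := (tendsto_const_nhds.sub (h0.pow 2)).const_mul _
    simpa using this
  have hden : Tendsto (fun θ : ℝ => Real.sqrt 2 * (1 + Real.exp (-θ)^2)
      + 2 * Real.exp (-θ)) atTop (𝓝 (Real.sqrt 2)) := by
    have : Tendsto (fun θ : ℝ => Real.sqrt 2 * ((1:ℝ) + Real.exp (-θ)^2) + 2 * Real.exp (-θ))
        atTop (𝓝 (Real.sqrt 2 * (1 + 0^2) + 2 * 0)) :=
      ((tendsto_const_nhds.add (h0.pow 2)).const_mul _).add (h0.const_mul _)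
    simpa using this
  have := hnum.div hden sqrt2_pos.ne'
  rwa [div_self sqrt2_pos.ne'] at this

lemma cfF_tendsto (m : ℕ) (hm : 1 ≤ m) :
    Tendsto (fun θ => Real.sqrt 2 * Real.sinh θ * ((cfW θ)^(m+1))⁻¹) atTop (𝓝 0) := by
  have key : ∀ θ : ℝ, Real.sqrt 2 * Real.sinh θ * ((cfW θ)^(m+1))⁻¹
      = (Real.sqrt 2 * Real.sinh θ * (cfW θ)⁻¹) * ((cfW θ)^m)⁻¹ := by
    intro θ
    rw [pow_succ, mul_inv]
    ring
  simp only [key]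
  have hw : Tendsto (fun θ => ((cfW θ)^m)⁻¹) atTop (𝓝 0) :=
    ((tendsto_pow_atTop (by omega : m ≠ 0)).comp cfW_tendsto_atTop).inv_tendsto_atTop
  have := cf_sw_tendsto.mul hw
  simpa using this

lemma cfC_one : cfC 1 = Real.pi / 4 := by
  have hderiv : ∀ x ∈ Ici (0:ℝ), HasDerivAt
      (fun θ => Real.arctan (Real.sinh θ / (Real.cosh θ + Real.sqrt 2)))
      (((cfW x)^1)⁻¹) x := by
    intro x _
    have hden : Real.cosh x + Real.sqrt 2 ≠ 0 := by
      have := Real.one_le_cosh x; have := sqrt2_pos; positivity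
    have hg : HasDerivAt (fun θ => Real.sinh θ / (Real.cosh θ + Real.sqrt 2))
        ((Real.cosh x * (Real.cosh x + Real.sqrt 2) - Real.sinh x * Real.sinh x)
          / (Real.cosh x + Real.sqrt 2)^2) x := by
      exact (Real.hasDerivAt_sinh x).div
        ((Real.hasDerivAt_cosh x).add_const (Real.sqrt 2)) hden
    have := (Real.hasDerivAt_arctan (Real.sinh x / (Real.cosh x + Real.sqrt 2))).comp x hg
    refine this.congr_deriv (Eq.symm ?_)
    have hs := Real.cosh_sq_sub_sinh_sq x
    have h2 := sqrt2_sq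
    have hw : cfW x = 1 + Real.sqrt 2 * Real.cosh x := rfl
    have hwne : cfW x ≠ 0 := (cfW_pos x).ne'
    have e1 : Real.cosh x * (Real.cosh x + Real.sqrt 2) - Real.sinh x * Real.sinh x
        = cfW x := by rw [hw]; linear_combination hs
    have e2 : 1 + (Real.sinh x / (Real.cosh x + Real.sqrt 2))^2
        = (cfW x)^2 / (Real.cosh x + Real.sqrt 2)^2 := by
      rw [hw]
      field_simp
      linear_combination (1 - Real.cosh x ^ 2) * h2 - hs
    rw [e1, e2, pow_one]
    field_simp
  have htend : Tendsto (fun θ => Real.arctan (Real.sinh θ / (Real.cosh θ + Real.sqrt 2)))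
      atTop (𝓝 (Real.pi/4)) := by
    rw [← Real.arctan_one]
    exact (Real.continuous_arctan.tendsto 1).comp cf_ratio_tendsto
  have := integral_Ioi_of_hasDerivAt_of_tendsto' hderiv (cf_integrable le_rfl) htend
  unfold cfC
  rw [this]
  simp [Real.sinh_zero]

lemma cfC_one_add_two : cfC 1 + cfC 2 = 1 := by
  have hderiv : ∀ x ∈ Ici (0:ℝ), HasDerivAt
      (fun θ => Real.sqrt 2 * Real.sinh θ * (cfW θ)⁻¹)
      (((cfW x)^1)⁻¹ + ((cfW x)^2)⁻¹) x := by
    intro x _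
    have h := ((Real.hasDerivAt_sinh x).const_mul (Real.sqrt 2)).mul
      ((cfW_hasDerivAt x).inv (cfW_pos x).ne')
    refine h.congr_deriv (Eq.symm ?_)
    have hs := Real.cosh_sq_sub_sinh_sq x
    have h2 := sqrt2_sq
    have hw : cfW x = 1 + Real.sqrt 2 * Real.cosh x := rfl
    have hwne : cfW x ≠ 0 := (cfW_pos x).ne'
    simp only [Pi.inv_apply]
    rw [pow_one]
    field_simp
    rw [hw]
    linear_combination (-(Real.sqrt 2 * Real.sqrt 2) * (1 + Real.sqrt 2 * Real.cosh x) + Real.sqrt 2 ^ 3 * Real.cosh x) * hs + (-(1 + Real.sqrt 2 * Real.cosh x) + Real.sqrt 2 * Real.cosh x) * h2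
  have := integral_Ioi_of_hasDerivAt_of_tendsto' hderiv
    ((cf_integrable le_rfl).add (cf_integrable one_le_two)) cf_sw_tendsto
  rw [integral_add (cf_integrable le_rfl) (cf_integrable one_le_two)] at this
  unfold cfC
  rw [this]
  simp [Real.sinh_zero]

lemma cfC_rec (m : ℕ) (hm : 1 ≤ m) :
    (m:ℝ) * cfC m = (2*m+1) * cfC (m+1) + ((m:ℝ)+1) * cfC (m+2) := by
  set D : ℝ → ℝ := fun x => -(m:ℝ) * ((cfW x)^m)⁻¹ + (2*m+1) * ((cfW x)^(m+1))⁻¹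
      + ((m:ℝ)+1) * ((cfW x)^(m+2))⁻¹ with hD
  have hderiv : ∀ x ∈ Ici (0:ℝ), HasDerivAt
      (fun θ => Real.sqrt 2 * Real.sinh θ * ((cfW θ)^(m+1))⁻¹) (D x) x := by
    intro x _
    have h := ((Real.hasDerivAt_sinh x).const_mul (Real.sqrt 2)).mul
      (((cfW_hasDerivAt x).pow (m+1)).inv (pow_ne_zero (m+1) (cfW_pos x).ne'))
    refine h.congr_deriv (Eq.symm ?_)
    have hs := Real.cosh_sq_sub_sinh_sq x
    have h2 := sqrt2_sq
    have hw : cfW x = 1 + Real.sqrt 2 * Real.cosh x := rfl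
    have hwne : cfW x ≠ 0 := (cfW_pos x).ne'
    have hAne : (cfW x)^m ≠ 0 := pow_ne_zero _ hwne
    have hp1 : (cfW x)^(m+1) = (cfW x)^m * cfW x := pow_succ _ _
    have hp2 : (cfW x)^(m+2) = (cfW x)^m * (cfW x)^2 := by rw [pow_add]
    rw [hD]
    simp only [Pi.inv_apply, Pi.pow_apply, Nat.add_sub_cancel, Nat.cast_add, Nat.cast_one, hp1, hp2]
    field_simp
    linear_combination
      (-(((m:ℝ)+1)) * (Real.sqrt 2 * Real.sqrt 2) * 1) * hs
      + (-((m:ℝ)+1) * 1) * h2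
      + ((((m:ℝ)+1) - ((m:ℝ)+1) * (Real.sqrt 2 * Real.cosh x) - (m:ℝ) * cfW x)
          * 1) * hw
  have hint : IntegrableOn D (Ioi (0:ℝ)) := by
    apply Integrable.add
    apply Integrable.add
    · exact (cf_integrable hm).const_mul _
    · exact (cf_integrable (by omega)).const_mul _
    · exact (cf_integrable (by omega)).const_mul _
  have := integral_Ioi_of_hasDerivAt_of_tendsto' hderiv hint (cfF_tendsto m hm)
  rw [hD] at this
  have i1 : IntegrableOn (fun θ : ℝ => -(m:ℝ) * ((cfW θ)^m)⁻¹) (Ioi (0:ℝ)) :=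
    (cf_integrable hm).const_mul _
  have i2 : IntegrableOn (fun θ : ℝ => ((2*m:ℝ)+1) * ((cfW θ)^(m+1))⁻¹) (Ioi (0:ℝ)) :=
    (cf_integrable (by omega : 1 ≤ m+1)).const_mul _
  have i3 : IntegrableOn (fun θ : ℝ => ((m:ℝ)+1) * ((cfW θ)^(m+2))⁻¹) (Ioi (0:ℝ)) :=
    (cf_integrable (by omega : 1 ≤ m+2)).const_mul _
  have i12 : IntegrableOn (fun θ : ℝ => -(m:ℝ) * ((cfW θ)^m)⁻¹
      + ((2*m:ℝ)+1) * ((cfW θ)^(m+1))⁻¹) (Ioi (0:ℝ)) := i1.add i2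
  rw [integral_add i12 i3, integral_add i1 i2,
    integral_const_mul, integral_const_mul, integral_const_mul] at this
  have h0 : Real.sqrt 2 * Real.sinh 0 * ((cfW 0)^(m+1))⁻¹ = 0 := by
    simp [Real.sinh_zero]
  rw [h0, sub_zero] at this
  unfold cfC
  linarith [this]

lemma cfC_le (n : ℕ) : cfC (n+2) ≤ ((2:ℝ)^n)⁻¹ := by
  have h1 : cfC (n+2) ≤ ((2:ℝ)^n)⁻¹ * cfC 2 := by
    have hmono : ∀ θ : ℝ, ((cfW θ)^(n+2))⁻¹ ≤ ((2:ℝ)^n)⁻¹ * ((cfW θ)^2)⁻¹ := by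
      intro θ
      have hwp := cfW_pos θ
      rw [← mul_inv]
      apply inv_anti₀ (by positivity)
      calc (2:ℝ)^n * (cfW θ)^2 ≤ (cfW θ)^n * (cfW θ)^2 := by
            apply mul_le_mul_of_nonneg_right
              (pow_le_pow_left₀ (by norm_num) (cfW_ge_two θ) n) (by positivity)
        _ = (cfW θ)^(n+2) := by rw [← pow_add]
    have hstep : (∫ θ in Ioi (0:ℝ), ((cfW θ)^(n+2))⁻¹)
        ≤ ∫ θ in Ioi (0:ℝ), ((2:ℝ)^n)⁻¹ * ((cfW θ)^2)⁻¹ :=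
      integral_mono (cf_integrable (by omega)) ((cf_integrable (by omega)).const_mul _)
        (fun θ => hmono θ)
    calc cfC (n+2) ≤ ∫ θ in Ioi (0:ℝ), ((2:ℝ)^n)⁻¹ * ((cfW θ)^2)⁻¹ := hstep
      _ = ((2:ℝ)^n)⁻¹ * cfC 2 := integral_const_mul _ _
  have h2 : cfC 2 ≤ 1 := by
    have ha := cfC_one_add_two
    have hb := cfC_nonneg 1
    linarith
  have hp : (0:ℝ) < ((2:ℝ)^n)⁻¹ := by positivity
  nlinarith [h1, h2, hp]

open Filter Topology

theorem stmt_5 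
    (a b p q : ℕ → ℝ)
    (ha0 : a 0 = 4)
    (ha1 : a 1 = 4)
    (ha : ∀ n : ℕ, 2 ≤ n → a n = 2 * (n : ℝ) + 1)
    (hb0 : b 0 = -4)
    (hb : ∀ n : ℕ, 1 ≤ n → b n = ((n : ℝ) + 1) ^ 2)
    (hp0 : p 0 = a 0) (hq0 : q 0 = 1)
    (hp1 : p 1 = a 0 * a 1 + b 0) (hq1 : q 1 = a 1)
    (hp : ∀ n : ℕ, p (n + 2) = a (n + 2) * p (n + 1) + b (n + 1) * p n)
    (hq : ∀ n : ℕ, q (n + 2) = a (n + 2) * q (n + 1) + b (n + 1) * q n) :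
    Tendsto (fun n => p n / q n) atTop (𝓝 (Real.pi)) := by
  have hC2 : cfC 2 = 1 - Real.pi / 4 := by
    have := cfC_one_add_two; rw [cfC_one] at this; linarith
  have hC3 : cfC 3 = (Real.pi - 3) / 2 := by
    have := cfC_rec 1 le_rfl
    norm_num at this
    rw [cfC_one, hC2] at this
    linarith
  -- the key identity
  have key : ∀ n : ℕ, p n - Real.pi * q n
      = (-1)^n * 4 * (Nat.factorial (n+1) : ℝ) * cfC (n+2) := by
    have main : ∀ n : ℕ, (p n - Real.pi * q n
        = (-1)^n * 4 * (Nat.factorial (n+1) : ℝ) * cfC (n+2)) ∧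
        (p (n+1) - Real.pi * q (n+1)
        = (-1)^(n+1) * 4 * (Nat.factorial (n+2) : ℝ) * cfC (n+3)) := by
      intro n
      induction n with
      | zero =>
        constructor
        · rw [hp0, hq0, ha0, hC2]
          norm_num [Nat.factorial]
          ring
        · rw [hp1, hq1, ha0, ha1, hb0, hC3]
          norm_num [Nat.factorial]
          ring
      | succ n ih =>
        obtain ⟨ih1, ih2⟩ := ih
        refine ⟨ih2, ?_⟩
        have hrec := cfC_rec (n+2) (by omega)
        have han : a (n+2) = 2 * ((n:ℝ)+2) + 1 := by
          have := ha (n+2) (by omega); push_cast at this ⊢; linarith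
        have hbn : b (n+1) = ((n:ℝ)+2)^2 := by
          have := hb (n+1) (by omega); push_cast at this ⊢; nlinarith [this]
        have hf2 : ((Nat.factorial (n+2) : ℕ) : ℝ)
            = ((n:ℝ)+2) * (Nat.factorial (n+1) : ℝ) := by
          rw [Nat.factorial_succ]; push_cast; ring
        have hf3 : ((Nat.factorial (n+3) : ℕ) : ℝ)
            = ((n:ℝ)+3) * ((n:ℝ)+2) * (Nat.factorial (n+1) : ℝ) := by
          rw [show n+3 = (n+2)+1 from rfl, Nat.factorial_succ, Nat.factorial_succ]
          push_cast; ring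
        rw [hp n, hq n, han, hbn]
        rw [hf2] at ih2
        rw [show n+1+2 = n+3 from rfl, hf3]
        push_cast at hrec ⊢
        rw [show n+2+1 = n+3 from rfl, show n+2+2 = n+4 from rfl] at hrec
        linear_combination (2*(n:ℝ)+5) * ih2 + ((n:ℝ)+2)^2 * ih1
          + ((-1)^n * 4 * ((n:ℝ)+2) * (Nat.factorial (n+1) : ℝ)) * hrec
    exact fun n => (main n).1
  -- lower bound for q
  have hqlb : ∀ n : ℕ, (2:ℝ)^n * (Nat.factorial (n+1) : ℝ) ≤ q n := by
    have main : ∀ n : ℕ, ((2:ℝ)^n * (Nat.factorial (n+1) : ℝ) ≤ q n) ∧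
        ((2:ℝ)^(n+1) * (Nat.factorial (n+2) : ℝ) ≤ q (n+1)) := by
      intro n
      induction n with
      | zero =>
        refine ⟨by rw [hq0]; norm_num [Nat.factorial], by rw [hq1, ha1]; norm_num [Nat.factorial]⟩
      | succ n ih =>
        obtain ⟨ih1, ih2⟩ := ih
        refine ⟨ih2, ?_⟩
        have han : a (n+2) = 2 * ((n:ℝ)+2) + 1 := by
          have := ha (n+2) (by omega); push_cast at this ⊢; linarith
        have hbn : b (n+1) = ((n:ℝ)+2)^2 := by
          have := hb (n+1) (by omega); push_cast at this ⊢; nlinarith [this]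
        rw [hq n, han, hbn]
        have hf2 : ((Nat.factorial (n+2) : ℕ) : ℝ)
            = ((n:ℝ)+2) * (Nat.factorial (n+1) : ℝ) := by
          rw [Nat.factorial_succ]; push_cast; ring
        have hf3 : ((Nat.factorial (n+1+2) : ℕ) : ℝ)
            = ((n:ℝ)+3) * ((n:ℝ)+2) * (Nat.factorial (n+1) : ℝ) := by
          rw [show n+1+2 = (n+2)+1 from rfl, Nat.factorial_succ, Nat.factorial_succ]
          push_cast; ring
        rw [hf3]
        rw [hf2] at ih2
        have hfp : (0:ℝ) < (Nat.factorial (n+1) : ℝ) := by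
          exact_mod_cast Nat.factorial_pos (n+1)
        have h2p : (0:ℝ) < (2:ℝ)^n := by positivity
        have e1 : (2:ℝ)^(n+1) = 2 * 2^n := by ring
        have e2 : (2:ℝ)^(n+1+1) = 4 * 2^n := by ring
        rw [e2]
        rw [e1] at ih2
        have t1 : (2*((n:ℝ)+2)+1) * (2 * 2^n * (((n:ℝ)+2) * (Nat.factorial (n+1) : ℝ)))
            ≤ (2*((n:ℝ)+2)+1) * q (n+1) :=
          mul_le_mul_of_nonneg_left ih2 (by positivity)
        have t2 : ((n:ℝ)+2)^2 * (2^n * (Nat.factorial (n+1) : ℝ))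
            ≤ ((n:ℝ)+2)^2 * q n :=
          mul_le_mul_of_nonneg_left ih1 (by positivity)
        have hn0 : (0:ℝ) ≤ (n:ℝ) := Nat.cast_nonneg n
        have t3 : 4 * 2^n * (((n:ℝ)+3)*((n:ℝ)+2)*(Nat.factorial (n+1) : ℝ))
            ≤ (2*((n:ℝ)+2)+1) * (2 * 2^n * (((n:ℝ)+2) * (Nat.factorial (n+1) : ℝ)))
              + ((n:ℝ)+2)^2 * (2^n * (Nat.factorial (n+1) : ℝ)) := by
          nlinarith [mul_nonneg (mul_nonneg hn0 (by positivity : (0:ℝ) ≤ (n:ℝ)+2))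
            (mul_pos h2p hfp).le]
        linarith [t1, t2, t3]
    exact fun n => (main n).1
  have hqpos : ∀ n : ℕ, 0 < q n := by
    intro n
    have := hqlb n
    have hfp : (0:ℝ) < (Nat.factorial (n+1) : ℝ) := by
      exact_mod_cast Nat.factorial_pos (n+1)
    have h2p : (0:ℝ) < (2:ℝ)^n := by positivity
    nlinarith
  -- the squeeze
  have habs : ∀ n : ℕ, |p n / q n - Real.pi| ≤ 4 * ((4:ℝ)^n)⁻¹ := by
    intro n
    have hqn := hqpos n
    have hfp : (0:ℝ) < (Nat.factorial (n+1) : ℝ) := by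
      exact_mod_cast Nat.factorial_pos (n+1)
    have hdiv : p n / q n - Real.pi = (p n - Real.pi * q n) / q n := by
      field_simp
    rw [hdiv, abs_div, abs_of_pos hqn, key n]
    have habs2 : |(-1:ℝ)^n * 4 * (Nat.factorial (n+1) : ℝ) * cfC (n+2)|
        = 4 * (Nat.factorial (n+1) : ℝ) * cfC (n+2) := by
      rw [abs_mul, abs_mul, abs_mul, abs_pow, abs_neg, abs_one, one_pow]
      rw [abs_of_nonneg (cfC_nonneg (n+2)), abs_of_nonneg hfp.le]
      norm_num
    rw [habs2]
    have hnum : 4 * (Nat.factorial (n+1) : ℝ) * cfC (n+2)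
        ≤ 4 * (Nat.factorial (n+1) : ℝ) * ((2:ℝ)^n)⁻¹ := by
      have := cfC_le n
      nlinarith [hfp]
    calc 4 * (Nat.factorial (n+1) : ℝ) * cfC (n+2) / q n
        ≤ 4 * (Nat.factorial (n+1) : ℝ) * ((2:ℝ)^n)⁻¹
          / ((2:ℝ)^n * (Nat.factorial (n+1) : ℝ)) := by
          apply div_le_div₀ (by positivity) hnum (by positivity) (hqlb n)
      _ = 4 * ((4:ℝ)^n)⁻¹ := by
          have h4 : (4:ℝ)^n = 2^n * 2^n := by rw [← mul_pow]; norm_num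
          rw [h4]
          field_simp
  have hz : Tendsto (fun n : ℕ => 4 * ((4:ℝ)^n)⁻¹) atTop (𝓝 0) := by
    have : Tendsto (fun n : ℕ => ((4:ℝ)⁻¹)^n) atTop (𝓝 0) := by
      apply tendsto_pow_atTop_nhds_zero_of_lt_one <;> norm_num
    have := this.const_mul (4:ℝ)
    simpa [inv_pow] using this
  have hzero : Tendsto (fun n : ℕ => p n / q n - Real.pi) atTop (𝓝 0) := by
    apply squeeze_zero_norm (fun n => ?_) hz
    simpa [Real.norm_eq_abs] using habs n
  have := hzero.add_const Real.pi
  simpa using this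
end

section
/- Define a(0) = 0 and a(n) = 11n² − 11n + 3 for n ≥ 1, and b(0) = 5 and b(n) = n⁴ for n ≥ 1. Then the convergents p(n)/q(n) of the continued fraction with partial quotients (a(n), b(n)) converge to ζ(2) = π²/6 as n → ∞. (This is Apéry's continued fraction for ζ(2).) -/
open Filter Topology Nat

namespace AperyZeta2

noncomputable def u (n k : ℕ) : ℝ :=
  if n ≤ k then (n ! : ℝ) * (k ! : ℝ) ^ 3 / (((k - n)! : ℝ) * (((n + k + 1)!) : ℝ) ^ 2) else 0

noncomputable def Rf (n k : ℕ) : ℝ :=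
  (k : ℝ) ^ 2 - (6 * (n : ℝ) + 1) * (k : ℝ) - 11 * (n : ℝ) ^ 2 - 15 * (n : ℝ) - 4

noncomputable def I (n : ℕ) : ℝ := ∑' k, u n k





lemma u_nonneg (n k : ℕ) : 0 ≤ u n k := by
  unfold u; split
  · positivity
  · exact le_refl 0

lemma u_eq (n k : ℕ) (h : n ≤ k) (d e : ℕ) (hd : k - n = d) (he : n + k + 1 = e) :
    u n k = (n ! : ℝ) * (k ! : ℝ) ^ 3 / ((d ! : ℝ) * ((e !) : ℝ) ^ 2) := by
  rw [u, if_pos h, hd, he]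

lemma u_zero (n k : ℕ) (h : k < n) : u n k = 0 := by
  rw [u, if_neg (by omega)]

-- (n+k+1)! ≥ k! (k+1)^(n+1)
lemma factA (n k : ℕ) : k ! * (k + 1) ^ (n + 1) ≤ (n + k + 1)! := by
  induction n with
  | zero => simp [Nat.factorial_succ, Nat.mul_comm]
  | succ n ih =>
    have : (n + 1 + k + 1)! = (n + k + 2) * (n + k + 1)! := by
      rw [show n + 1 + k + 1 = (n + k + 1) + 1 by ring, Nat.factorial_succ]
    rw [this, pow_succ]
    calc k ! * ((k+1)^(n+1) * (k+1)) = (k+1) * (k ! * (k+1)^(n+1)) := by ring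
    _ ≤ (n + k + 2) * (n + k + 1)! := Nat.mul_le_mul (by omega) ih

-- k! ≤ (k-n)! (k+1)^n for n ≤ k
lemma factB (n k : ℕ) (h : n ≤ k) : k ! ≤ (k - n)! * (k + 1) ^ n := by
  induction n with
  | zero => simp
  | succ n ih =>
    have h' : n ≤ k := by omega
    have h2 : (k - n)! = (k - n) * (k - (n+1))! := by
      rw [show k - n = (k - (n+1)) + 1 by omega, Nat.factorial_succ]
    calc k ! ≤ (k - n)! * (k+1)^n := ih h'
      _ = (k - n) * ((k - (n+1))! * (k+1)^n) := by rw [h2]; ring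
      _ ≤ (k+1) * ((k - (n+1))! * (k+1)^n) := Nat.mul_le_mul (by omega) le_rfl
      _ = (k - (n+1))! * (k+1)^(n+1) := by ring

lemma master2 (n k : ℕ) (h : n ≤ k) :
    (k !) ^ 3 * (k + 1) ^ (n + 2) ≤ (k - n)! * ((n + k + 1)!) ^ 2 := by
  calc (k !)^3 * (k+1)^(n+2)
      ≤ ((k - n)! * (k+1)^n) * (k !)^2 * (k+1)^(n+2) := by
        calc (k !)^3 * (k+1)^(n+2) = k ! * ((k !)^2 * (k+1)^(n+2)) := by ring
          _ ≤ ((k - n)! * (k+1)^n) * ((k !)^2 * (k+1)^(n+2)) :=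
              Nat.mul_le_mul_right _ (factB n k h)
          _ = (k - n)! * (k+1)^n * (k !)^2 * (k+1)^(n+2) := by ring
    _ = (k - n)! * (k ! * (k+1)^(n+1))^2 := by ring
    _ ≤ (k - n)! * ((n + k + 1)!)^2 := Nat.mul_le_mul le_rfl (Nat.pow_le_pow_left (factA n k) 2)

lemma master1 (n k : ℕ) (h : n ≤ k) :
    n ! * (k !) ^ 3 * (k + 1) ^ 2 ≤ (k - n)! * ((n + k + 1)!) ^ 2 := by
  calc n ! * (k !)^3 * (k+1)^2 ≤ (k+1)^n * (k !)^3 * (k+1)^2 := by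
        have h1 : n ! ≤ (k+1)^n :=
          le_trans n.factorial_le_pow (Nat.pow_le_pow_left (by omega) n)
        exact Nat.mul_le_mul (Nat.mul_le_mul_right _ h1) le_rfl
    _ = (k !)^3 * (k+1)^(n+2) := by ring
    _ ≤ _ := master2 n k h



lemma u_le1 (n k : ℕ) : u n k ≤ 1 / ((k : ℝ) + 1) ^ 2 := by
  unfold u; split
  · next h =>
    rw [div_le_div_iff₀ (by positivity) (by positivity)]
    have := master1 n k h
    calc (n ! : ℝ) * (k ! : ℝ)^3 * ((k:ℝ)+1)^2
        = ((n ! * (k !)^3 * (k+1)^2 : ℕ) : ℝ) := by push_cast; ring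
      _ ≤ (((k - n)! * ((n + k + 1)!)^2 : ℕ) : ℝ) := by exact_mod_cast Nat.cast_le.mpr this
      _ = ((k-n)! : ℝ) * (((n+k+1)!) : ℝ)^2 * 1 := by push_cast; ring
      _ ≤ 1 * (((k-n)! : ℝ) * (((n+k+1)!) : ℝ)^2) := le_of_eq (by ring)
  · positivity

lemma u_le2 (n k : ℕ) : u n k ≤ (n ! : ℝ) / ((k : ℝ) + 1) ^ (n + 2) := by
  unfold u; split
  · next h =>
    rw [div_le_div_iff₀ (by positivity) (by positivity)]
    have := Nat.mul_le_mul_left (n !) (master2 n k h)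
    calc (n ! : ℝ) * (k ! : ℝ)^3 * ((k:ℝ)+1)^(n+2)
        = ((n ! * ((k !)^3 * (k+1)^(n+2)) : ℕ) : ℝ) := by push_cast; ring
      _ ≤ ((n ! * ((k - n)! * ((n + k + 1)!)^2) : ℕ) : ℝ) := by exact_mod_cast Nat.cast_le.mpr this
      _ = ((k-n)! : ℝ) * (((n+k+1)!) : ℝ)^2 * (n !) := by push_cast; ring
      _ ≤ (n ! : ℝ) * (((k-n)! : ℝ) * (((n+k+1)!) : ℝ)^2) := le_of_eq (by ring)
  · positivity

lemma summable_invsq : Summable (fun k : ℕ => 1 / ((k : ℝ) + 1) ^ 2) := by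
  have h : Summable (fun k : ℕ => 1 / (k : ℝ) ^ 2) :=
    Real.summable_one_div_nat_pow.mpr one_lt_two
  have := (summable_nat_add_iff 1).mpr h
  refine this.congr fun k => by push_cast; ring

lemma summable_u (n : ℕ) : Summable (u n) :=
  Summable.of_nonneg_of_le (u_nonneg n) (u_le1 n) summable_invsq

lemma I_nonneg (n : ℕ) : 0 ≤ I n := tsum_nonneg (u_nonneg n)

lemma I_zero : I 0 = Real.pi ^ 2 / 6 := by
  have h0 : ∀ k : ℕ, u 0 k = 1 / ((k:ℝ)+1)^2 := by
    intro k
    rw [u, if_pos (Nat.zero_le k)]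
    have h1 : ((k - 0)! : ℝ) = (k ! : ℝ) := by norm_num
    have h2 : (((0 + k + 1)!) : ℝ) = ((k:ℝ)+1) * (k ! : ℝ) := by
      rw [show 0 + k + 1 = k + 1 by ring, Nat.factorial_succ]; push_cast; ring
    rw [h1, h2]
    have : (k ! : ℝ) ≠ 0 := by positivity
    field_simp
    ring
  have hs : HasSum (fun k : ℕ => 1 / ((k:ℝ)+1)^2) (Real.pi^2/6) := by
    have h := (hasSum_nat_add_iff' (f := fun n : ℕ => (1:ℝ) / (n:ℝ)^2) 1).mpr hasSum_zeta_two
    simp only [Finset.range_one, Finset.sum_singleton, Nat.cast_zero] at h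
    norm_num at h
    exact h.congr_fun fun k => by push_cast; norm_num
  rw [I]
  simp only [h0]
  exact hs.tsum_eq

lemma I_one : I 1 = 5 - 3 * (Real.pi ^ 2 / 6) := by
  have hfun : ∀ k : ℕ, u 1 k =
      (3 / ((k:ℝ)+1) - 3 / ((k:ℝ)+2)) - 1/((k:ℝ)+1)^2 - 2 * (1/((k:ℝ)+2)^2) := by
    intro k
    match k with
    | 0 => rw [u]; norm_num
    | (j+1) =>
      rw [u, if_pos (by omega)]
      rw [show j + 1 - 1 = j from rfl, show 1 + (j+1) + 1 = j + 3 by ring]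
      have h1 : ((j+1)! : ℝ) = ((j:ℝ)+1) * (j ! : ℝ) := by rw [Nat.factorial_succ]; push_cast; ring
      have h3 : ((j+3)! : ℝ) = ((j:ℝ)+3)*((j:ℝ)+2)*((j:ℝ)+1) * (j ! : ℝ) := by
        rw [show j+3 = (j+2)+1 by ring, Nat.factorial_succ, show j+2 = (j+1)+1 by ring,
          Nat.factorial_succ, Nat.factorial_succ]; push_cast; ring
      rw [h1, h3, Nat.factorial_one]
      have : (j ! : ℝ) ≠ 0 := by positivity
      have hj1 : ((j:ℝ)+1) ≠ 0 := by positivity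
      have hj2 : ((j:ℝ)+2) ≠ 0 := by positivity
      have hj3 : ((j:ℝ)+3) ≠ 0 := by positivity
      push_cast
      field_simp
      ring
  have hP2 : HasSum (fun k : ℕ => 1 / ((k:ℝ)+1)^2) (Real.pi^2/6) := by
    have h := (hasSum_nat_add_iff' (f := fun n : ℕ => (1:ℝ) / (n:ℝ)^2) 1).mpr hasSum_zeta_two
    simp only [Finset.range_one, Finset.sum_singleton, Nat.cast_zero] at h
    norm_num at h
    exact h.congr_fun fun k => by push_cast; norm_num
  have hP3 : HasSum (fun k : ℕ => 1 / ((k:ℝ)+2)^2) (Real.pi^2/6 - 1) := by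
    have h := (hasSum_nat_add_iff' (f := fun n : ℕ => (1:ℝ) / (n:ℝ)^2) 2).mpr hasSum_zeta_two
    have h2 : ∑ i ∈ Finset.range 2, (1:ℝ) / (i:ℝ)^2 = 1 := by
      norm_num [Finset.sum_range_succ]
    rw [h2] at h
    exact h.congr_fun fun k => by push_cast; norm_num
  have hP1 : HasSum (fun k : ℕ => 3 / ((k:ℝ)+1) - 3 / ((k:ℝ)+2)) 3 := by
    rw [hasSum_iff_tendsto_nat_of_nonneg]
    · have heq : ∀ N : ℕ, ∑ i ∈ Finset.range N, (3 / ((i:ℝ)+1) - 3 / ((i:ℝ)+2)) = 3/((0:ℝ)+1) - 3/((N:ℝ)+1) := by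
        intro N
        have h := Finset.sum_range_sub' (f := fun i : ℕ => 3 / ((i:ℝ)+1)) N
        rw [show (3:ℝ)/((0:ℝ)+1) - 3/((N:ℝ)+1) = 3/(((0:ℕ):ℝ)+1) - 3/((N:ℝ)+1) by norm_num, ← h]
        refine Finset.sum_congr rfl fun i _ => ?_
        push_cast; ring_nf
      rw [funext heq]
      have hlim := tendsto_one_div_add_atTop_nhds_zero_nat (𝕜 := ℝ)
      have := hlim.const_mul (3:ℝ)
      rw [mul_zero] at this
      simp only [mul_one_div] at this
      have h3 : Tendsto (fun N : ℕ => 3/((0:ℝ)+1) - 3/((N:ℝ)+1)) atTop (𝓝 (3/((0:ℝ)+1) - 0)) :=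
        tendsto_const_nhds.sub this
      norm_num at h3 ⊢
      exact h3
    · intro i
      have h1 : ((i:ℝ)+1) ≤ ((i:ℝ)+2) := by linarith
      have : 3 / ((i:ℝ)+2) ≤ 3 / ((i:ℝ)+1) := by
        apply div_le_div_of_nonneg_left (by norm_num) (by positivity) h1
      linarith
  have hcomb := (hP1.sub hP2).sub (hP3.mul_left 2)
  have : HasSum (u 1) (3 - Real.pi^2/6 - 2 * (Real.pi^2/6 - 1)) := by
    refine hcomb.congr_fun fun k => ?_
    rw [hfun k]
  rw [I, this.tsum_eq]
  ring



-- cast helper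
lemma fact_cast_succ (a : ℕ) : ((a+1)! : ℝ) = ((a:ℝ)+1) * (a ! : ℝ) := by
  rw [Nat.factorial_succ]; push_cast; ring

-- boundary case k = m
lemma step_bd1 (m : ℕ) :
    ((m:ℝ)+2)^2 * u (m+2) m + (11*((m:ℝ)+1)^2 + 11*((m:ℝ)+1) + 3) * u (m+1) m
      - ((m:ℝ)+1)^2 * u m m
    = Rf (m+1) (m+1) * u (m+1) (m+1) - Rf (m+1) m * u (m+1) m := by
  rw [u_zero (m+2) m (by omega), u_zero (m+1) m (by omega),
    u_eq m m le_rfl 0 (2*m+1) (by omega) (by omega),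
    u_eq (m+1) (m+1) le_rfl 0 (2*m+3) (by omega) (by omega)]
  have h1 : ((m+1)! : ℝ) = ((m:ℝ)+1) * (m ! : ℝ) := fact_cast_succ m
  have h2 : ((2*m+3)! : ℝ) = (2*(m:ℝ)+3) * (2*(m:ℝ)+2) * ((2*m+1)! : ℝ) := by
    rw [show 2*m+3 = (2*m+2)+1 by ring, fact_cast_succ, show 2*m+2 = (2*m+1)+1 by ring,
      fact_cast_succ]
    push_cast; ring
  rw [h1, h2, Rf, Rf]
  have hm : (m ! : ℝ) ≠ 0 := by positivity
  have hf : ((2*m+1)! : ℝ) ≠ 0 := by positivity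
  have h3 : (2*(m:ℝ)+3) ≠ 0 := by positivity
  have h4 : (2*(m:ℝ)+2) ≠ 0 := by positivity
  push_cast
  field_simp
  ring

-- boundary case k = m+1
lemma step_bd2 (m : ℕ) :
    ((m:ℝ)+2)^2 * u (m+2) (m+1) + (11*((m:ℝ)+1)^2 + 11*((m:ℝ)+1) + 3) * u (m+1) (m+1)
      - ((m:ℝ)+1)^2 * u m (m+1)
    = Rf (m+1) (m+2) * u (m+1) (m+2) - Rf (m+1) (m+1) * u (m+1) (m+1) := by
  rw [u_zero (m+2) (m+1) (by omega),
    u_eq (m+1) (m+1) le_rfl 0 (2*m+3) (by omega) (by omega),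
    u_eq m (m+1) (by omega) 1 (2*m+2) (by omega) (by omega),
    u_eq (m+1) (m+2) (by omega) 1 (2*m+4) (by omega) (by omega)]
  have h1 : ((m+1)! : ℝ) = ((m:ℝ)+1) * (m ! : ℝ) := fact_cast_succ m
  have h1b : ((m+2)! : ℝ) = ((m:ℝ)+2) * (((m:ℝ)+1) * (m ! : ℝ)) := by
    rw [show m+2 = (m+1)+1 by ring, fact_cast_succ, h1]; push_cast; ring
  have h2 : ((2*m+3)! : ℝ) = (2*(m:ℝ)+3) * ((2*m+2)! : ℝ) := by
    rw [show 2*m+3 = (2*m+2)+1 by ring, fact_cast_succ]; push_cast; ring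
  have h3 : ((2*m+4)! : ℝ) = (2*(m:ℝ)+4) * ((2*(m:ℝ)+3) * ((2*m+2)! : ℝ)) := by
    rw [show 2*m+4 = (2*m+3)+1 by ring, fact_cast_succ, h2]; push_cast; ring
  rw [h1b, h1, h2, h3, Rf, Rf]
  have hm : (m ! : ℝ) ≠ 0 := by positivity
  have hf : ((2*m+2)! : ℝ) ≠ 0 := by positivity
  push_cast
  field_simp
  ring

-- generic case k = m+2+j
lemma step_gen (m j : ℕ) :
    ((m:ℝ)+2)^2 * u (m+2) (m+2+j) + (11*((m:ℝ)+1)^2 + 11*((m:ℝ)+1) + 3) * u (m+1) (m+2+j)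
      - ((m:ℝ)+1)^2 * u m (m+2+j)
    = Rf (m+1) (m+3+j) * u (m+1) (m+3+j) - Rf (m+1) (m+2+j) * u (m+1) (m+2+j) := by
  rw [u_eq (m+2) (m+2+j) (by omega) j (2*m+j+5) (by omega) (by omega),
    u_eq (m+1) (m+2+j) (by omega) (j+1) (2*m+j+4) (by omega) (by omega),
    u_eq m (m+2+j) (by omega) (j+2) (2*m+j+3) (by omega) (by omega),
    u_eq (m+1) (m+3+j) (by omega) (j+2) (2*m+j+5) (by omega) (by omega)]
  have h1 : ((m+1)! : ℝ) = ((m:ℝ)+1) * (m ! : ℝ) := fact_cast_succ m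
  have h1b : ((m+2)! : ℝ) = ((m:ℝ)+2) * (((m:ℝ)+1) * (m ! : ℝ)) := by
    rw [show m+2 = (m+1)+1 by ring, fact_cast_succ, h1]; push_cast; ring
  have hj1 : ((j+1)! : ℝ) = ((j:ℝ)+1) * (j ! : ℝ) := fact_cast_succ j
  have hj2 : ((j+2)! : ℝ) = ((j:ℝ)+2) * (((j:ℝ)+1) * (j ! : ℝ)) := by
    rw [show j+2 = (j+1)+1 by ring, fact_cast_succ, hj1]; push_cast; ring
  have hk1 : ((m+2+j)! : ℝ) = ((m+2+j)! : ℝ) := rfl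
  have hk2 : ((m+3+j)! : ℝ) = ((m:ℝ)+(j:ℝ)+3) * ((m+2+j)! : ℝ) := by
    rw [show m+3+j = (m+2+j)+1 by ring, fact_cast_succ]; push_cast; ring
  have hE1 : ((2*m+j+4)! : ℝ) = (2*(m:ℝ)+(j:ℝ)+4) * ((2*m+j+3)! : ℝ) := by
    rw [show 2*m+j+4 = (2*m+j+3)+1 by ring, fact_cast_succ]; push_cast; ring
  have hE2 : ((2*m+j+5)! : ℝ) = (2*(m:ℝ)+(j:ℝ)+5) * ((2*(m:ℝ)+(j:ℝ)+4) * ((2*m+j+3)! : ℝ)) := by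
    rw [show 2*m+j+5 = (2*m+j+4)+1 by ring, fact_cast_succ, hE1]; push_cast; ring
  rw [h1b, h1, hj1, hj2, hk2, hE1, hE2, Rf, Rf]
  have hm : (m ! : ℝ) ≠ 0 := by positivity
  have hjf : (j ! : ℝ) ≠ 0 := by positivity
  have hk : ((m+2+j)! : ℝ) ≠ 0 := by positivity
  have hE : ((2*m+j+3)! : ℝ) ≠ 0 := by positivity
  push_cast
  field_simp
  ring



lemma step_all (m k : ℕ) :
    ((m:ℝ)+2)^2 * u (m+2) k + (11*((m:ℝ)+1)^2 + 11*((m:ℝ)+1) + 3) * u (m+1) k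
      - ((m:ℝ)+1)^2 * u m k
    = Rf (m+1) (k+1) * u (m+1) (k+1) - Rf (m+1) k * u (m+1) k := by
  rcases lt_trichotomy k m with h | heq | h
  · rw [u_zero (m+2) k (by omega), u_zero (m+1) k (by omega), u_zero m k (by omega),
      u_zero (m+1) (k+1) (by omega)]
    ring
  · subst heq; exact step_bd1 k
  · rcases Nat.lt_or_ge k (m+2) with h2 | h2
    · have : k = m + 1 := by omega
      subst this
      exact step_bd2 m
    · obtain ⟨j, rfl⟩ : ∃ j, k = m + 2 + j := ⟨k - m - 2, by omega⟩
      have := step_gen m j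
      rw [show m+2+j+1 = m+3+j by ring]
      exact this

lemma Rf_abs_le (n k : ℕ) : |Rf n k| ≤ (11*(n:ℝ)^2 + 21*(n:ℝ) + 6) * ((k:ℝ)+1)^2 := by
  have hn : (0:ℝ) ≤ (n:ℝ) := Nat.cast_nonneg n
  have hk : (0:ℝ) ≤ (k:ℝ) := Nat.cast_nonneg k
  rw [abs_le, Rf]
  constructor <;> nlinarith [sq_nonneg ((k:ℝ)+1), sq_nonneg ((k:ℝ) - (n:ℝ)), sq_nonneg ((n:ℝ)+1)]

lemma g_tendsto (m : ℕ) :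
    Tendsto (fun k => Rf (m+1) k * u (m+1) k) atTop (𝓝 0) := by
  have hB : Tendsto (fun k : ℕ => ((11*((m:ℝ)+1)^2 + 21*((m:ℝ)+1) + 6) * ((m+1)! : ℝ)) * (1/((k:ℝ)+1))) atTop (𝓝 0) := by
    have := tendsto_one_div_add_atTop_nhds_zero_nat.const_mul
      ((11*((m:ℝ)+1)^2 + 21*((m:ℝ)+1) + 6) * ((m+1)! : ℝ))
    rw [mul_zero] at this
    exact this
  refine squeeze_zero_norm (fun k => ?_) hB
  · 
    have h1 : ‖Rf (m+1) k * u (m+1) k‖ = |Rf (m+1) k| * u (m+1) k := by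
      rw [norm_mul, Real.norm_eq_abs, Real.norm_eq_abs, abs_of_nonneg (u_nonneg _ _)]
    rw [h1]
    have h2 : |Rf (m+1) k| ≤ (11*((m:ℝ)+1)^2 + 21*((m:ℝ)+1) + 6) * ((k:ℝ)+1)^2 := by
      have := Rf_abs_le (m+1) k
      push_cast at this ⊢
      exact this
    have h3 : u (m+1) k ≤ ((m+1)! : ℝ) / ((k:ℝ)+1)^3 := by
      refine le_trans (u_le2 (m+1) k) ?_
      apply div_le_div_of_nonneg_left (by positivity) (by positivity)
      apply pow_le_pow_right₀ (by linarith [Nat.cast_nonneg (α := ℝ) k]) (by omega)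
    calc |Rf (m+1) k| * u (m+1) k
        ≤ ((11*((m:ℝ)+1)^2 + 21*((m:ℝ)+1) + 6) * ((k:ℝ)+1)^2) * (((m+1)! : ℝ) / ((k:ℝ)+1)^3) :=
          mul_le_mul h2 h3 (u_nonneg _ _) (by positivity)
      _ = ((11*((m:ℝ)+1)^2 + 21*((m:ℝ)+1) + 6) * ((m+1)! : ℝ)) * (1/((k:ℝ)+1)) := by
          have : ((k:ℝ)+1) ≠ 0 := by positivity
          field_simp

lemma Irec (m : ℕ) :
    ((m:ℝ)+2)^2 * I (m+2) + (11*((m:ℝ)+1)^2 + 11*((m:ℝ)+1) + 3) * I (m+1)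
      - ((m:ℝ)+1)^2 * I m = 0 := by
  set c2 := ((m:ℝ)+2)^2
  set c1 := (11*((m:ℝ)+1)^2 + 11*((m:ℝ)+1) + 3)
  set c0 := ((m:ℝ)+1)^2
  have hs2 := (summable_u (m+2)).mul_left c2
  have hs1 := (summable_u (m+1)).mul_left c1
  have hs0 := (summable_u m).mul_left c0
  have hd : Summable (fun k => c2 * u (m+2) k + c1 * u (m+1) k - c0 * u m k) :=
    (hs2.add hs1).sub hs0
  have htel : ∀ N : ℕ, ∑ k ∈ Finset.range N,
      (c2 * u (m+2) k + c1 * u (m+1) k - c0 * u m k)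
      = Rf (m+1) N * u (m+1) N := by
    intro N
    have h := Finset.sum_range_sub (f := fun k => Rf (m+1) k * u (m+1) k) N
    calc ∑ k ∈ Finset.range N, (c2 * u (m+2) k + c1 * u (m+1) k - c0 * u m k)
        = ∑ k ∈ Finset.range N,
            (Rf (m+1) (k+1) * u (m+1) (k+1) - Rf (m+1) k * u (m+1) k) :=
          Finset.sum_congr rfl fun k _ => step_all m k
      _ = Rf (m+1) N * u (m+1) N - Rf (m+1) 0 * u (m+1) 0 := h
      _ = Rf (m+1) N * u (m+1) N := by rw [u_zero (m+1) 0 (by omega)]; ring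
  have h1 : Tendsto (fun N => ∑ k ∈ Finset.range N,
      (c2 * u (m+2) k + c1 * u (m+1) k - c0 * u m k)) atTop
      (𝓝 (∑' k, (c2 * u (m+2) k + c1 * u (m+1) k - c0 * u m k))) :=
    hd.hasSum.tendsto_sum_nat
  have h2 : Tendsto (fun N => ∑ k ∈ Finset.range N,
      (c2 * u (m+2) k + c1 * u (m+1) k - c0 * u m k)) atTop (𝓝 0) := by
    simp only [htel]
    exact g_tendsto m
  have h0 : (∑' k, (c2 * u (m+2) k + c1 * u (m+1) k - c0 * u m k)) = 0 :=
    tendsto_nhds_unique h1 h2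
  have hsplit : (∑' k, (c2 * u (m+2) k + c1 * u (m+1) k - c0 * u m k))
      = c2 * I (m+2) + c1 * I (m+1) - c0 * I m := by
    rw [Summable.tsum_sub (hs2.add hs1) hs0, Summable.tsum_add hs2 hs1,
      tsum_mul_left, tsum_mul_left, tsum_mul_left]
    rfl
  rw [← hsplit, h0]



set_option maxHeartbeats 1000000 in
lemma I_tendsto : Tendsto I atTop (𝓝 0) := by
  have hshift : ∀ n, I n = ∑' k, u n (k + n) := by
    intro n
    have h := Summable.sum_add_tsum_nat_add (f := u n) n (summable_u n)
    have h0 : ∑ i ∈ Finset.range n, u n i = 0 :=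
      Finset.sum_eq_zero fun i hi => u_zero n i (Finset.mem_range.mp hi)
    rw [I, ← h, h0, zero_add]
  have hle : ∀ n, I n ≤ ∑' k, 1 / (((k + n : ℕ) : ℝ) + 1) ^ 2 := by
    intro n
    rw [hshift n]
    refine Summable.tsum_le_tsum (fun k => u_le1 n (k+n)) ?_ ?_
    · exact (summable_nat_add_iff n).mpr (summable_u n)
    · exact (summable_nat_add_iff n).mpr summable_invsq
  have htail : Tendsto (fun n => ∑' k, 1 / (((k + n : ℕ) : ℝ) + 1) ^ 2) atTop (𝓝 0) :=
    tendsto_sum_nat_add (f := fun k : ℕ => 1 / ((k : ℝ) + 1) ^ 2)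
  exact squeeze_zero I_nonneg hle htail


end AperyZeta2

theorem stmt_7 
    (a b p q : ℕ → ℝ)
    (ha0 : a 0 = 0)
    (ha : ∀ n : ℕ, 1 ≤ n → a n = 11 * (n : ℝ) ^ 2 - 11 * (n : ℝ) + 3)
    (hb0 : b 0 = 5)
    (hb : ∀ n : ℕ, 1 ≤ n → b n = (n : ℝ) ^ 4)
    (hp0 : p 0 = a 0) (hq0 : q 0 = 1)
    (hp1 : p 1 = a 0 * a 1 + b 0) (hq1 : q 1 = a 1)
    (hp : ∀ n : ℕ, p (n + 2) = a (n + 2) * p (n + 1) + b (n + 1) * p n)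
    (hq : ∀ n : ℕ, q (n + 2) = a (n + 2) * q (n + 1) + b (n + 1) * q n) :
    Tendsto (fun n => p n / q n) atTop (𝓝 (Real.pi ^ 2 / 6)) := by
  have ha1 : a 1 = 3 := by rw [ha 1 le_rfl]; norm_num
  have herr : ∀ n : ℕ, Real.pi^2/6 * q n - p n = (-1:ℝ)^n * ((n ! : ℝ))^2 * AperyZeta2.I n := by
    intro n
    induction n using Nat.twoStepInduction with
    | zero => rw [hq0, hp0, ha0, AperyZeta2.I_zero]; norm_num
    | one =>
      rw [hq1, hp1, ha0, hb0, ha1, AperyZeta2.I_one]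
      norm_num
      ring
    | more n ih1 ih2 =>
      have han2 : a (n+2) = 11*((n:ℝ)+2)^2 - 11*((n:ℝ)+2) + 3 := by
        rw [ha (n+2) (by omega)]; push_cast; ring
      have hbn1 : b (n+1) = ((n:ℝ)+1)^4 := by
        rw [hb (n+1) (by omega)]; push_cast; ring
      have hlin : Real.pi^2/6 * q (n+2) - p (n+2)
          = (11*((n:ℝ)+2)^2 - 11*((n:ℝ)+2) + 3) * (Real.pi^2/6 * q (n+1) - p (n+1))
            + ((n:ℝ)+1)^4 * (Real.pi^2/6 * q n - p n) := by
        rw [hp n, hq n, han2, hbn1]; ring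
      rw [hlin, ih1, ih2]
      have hf2 : (((n+2)!) : ℝ) = ((n:ℝ)+2) * (((n:ℝ)+1) * ((n !) : ℝ)) := by
        rw [show n+2 = (n+1)+1 by ring, AperyZeta2.fact_cast_succ, AperyZeta2.fact_cast_succ]
        push_cast; ring
      have hf1 : (((n+1)!) : ℝ) = ((n:ℝ)+1) * ((n !) : ℝ) := AperyZeta2.fact_cast_succ n
      rw [hf2, hf1, pow_succ, pow_succ]
      linear_combination (-(-1:ℝ)^n * (((n:ℝ)+1) * ((n !) : ℝ))^2) * AperyZeta2.Irec n
  have hqge : ∀ n : ℕ, ((n ! : ℝ))^2 ≤ q n := by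
    intro n
    induction n using Nat.twoStepInduction with
    | zero => rw [hq0]; norm_num
    | one => rw [hq1, ha1]; norm_num
    | more n ih1 ih2 =>
      have han2 : a (n+2) = 11*((n:ℝ)+2)^2 - 11*((n:ℝ)+2) + 3 := by
        rw [ha (n+2) (by omega)]; push_cast; ring
      have hbn1 : b (n+1) = ((n:ℝ)+1)^4 := by
        rw [hb (n+1) (by omega)]; push_cast; ring
      have hf2 : (((n+2)!) : ℝ) = ((n:ℝ)+2) * (((n:ℝ)+1) * ((n !) : ℝ)) := by
        rw [show n+2 = (n+1)+1 by ring, AperyZeta2.fact_cast_succ, AperyZeta2.fact_cast_succ]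
        push_cast; ring
      have hf1 : (((n+1)!) : ℝ) = ((n:ℝ)+1) * ((n !) : ℝ) := AperyZeta2.fact_cast_succ n
      rw [hq n, han2, hbn1, hf2]
      rw [hf1] at ih2
      have hn : (0:ℝ) ≤ (n:ℝ) := Nat.cast_nonneg n
      have h0 : (0:ℝ) ≤ ((n !) : ℝ)^2 := by positivity
      have hq1' : (0:ℝ) ≤ q (n+1) := le_trans (by positivity) ih2
      have hqn' : (0:ℝ) ≤ q n := le_trans h0 ih1
      have hA : ((n:ℝ)+2)^2 ≤ 11*((n:ℝ)+2)^2 - 11*((n:ℝ)+2) + 3 := by nlinarith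
      have h1 : ((n:ℝ)+2)^2 * ((((n:ℝ)+1)*((n !) : ℝ))^2) ≤ ((n:ℝ)+2)^2 * q (n+1) :=
        mul_le_mul_of_nonneg_left ih2 (by positivity)
      have h2 : ((n:ℝ)+2)^2 * q (n+1) ≤ (11*((n:ℝ)+2)^2 - 11*((n:ℝ)+2) + 3) * q (n+1) :=
        mul_le_mul_of_nonneg_right hA hq1'
      have h3 : (0:ℝ) ≤ ((n:ℝ)+1)^4 * q n := by positivity
      nlinarith [h1, h2, h3]
  have hqpos : ∀ n : ℕ, 0 < q n := fun n =>
    lt_of_lt_of_le (by positivity) (hqge n)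
  have hkey : ∀ n : ℕ, ‖p n / q n - Real.pi^2/6‖ ≤ AperyZeta2.I n := by
    intro n
    have hq0' := hqpos n
    have h1 : p n / q n - Real.pi^2/6 = -(Real.pi^2/6 * q n - p n) / q n := by
      field_simp
      ring
    rw [h1, herr n, Real.norm_eq_abs, abs_div, abs_of_pos hq0', abs_neg, abs_mul, abs_mul,
      abs_pow, abs_neg, abs_one, one_pow, one_mul, abs_of_nonneg (AperyZeta2.I_nonneg n),
      abs_of_nonneg (by positivity : (0:ℝ) ≤ ((n ! : ℝ))^2)]
    rw [div_le_iff₀ hq0']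
    nlinarith [hqge n, AperyZeta2.I_nonneg n, sq_nonneg ((n ! : ℝ))]
  have hdiff : Tendsto (fun n => p n / q n - Real.pi^2/6) atTop (𝓝 0) :=
    squeeze_zero_norm hkey AperyZeta2.I_tendsto
  have := hdiff.add (tendsto_const_nhds (x := Real.pi^2/6))
  simpa using this
end

section
/- Define a(0) = 1/2 and a(n) = 7n − 5 for n ≥ 1, and b(0) = 1 and b(n) = −4n(3n−2) for n ≥ 1. Then the convergents p(n)/q(n) of the continued fraction with partial quotients (a(n), b(n)) converge to 2^{1/3} (the real cube root of 2) as n → ∞. -/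
open Filter Topology Finset

noncomputable def cc : ℕ → ℝ := fun m => (∏ k ∈ Finset.range m, (2/3 - (k:ℝ))) / (m.factorial : ℝ)

lemma cc_zero : cc 0 = 1 := by simp [cc]

lemma cc_succ (m : ℕ) : cc (m+1) = cc m * ((2/3 - (m:ℝ)) / ((m:ℝ)+1)) := by
  have h1 : (m.factorial : ℝ) ≠ 0 := Nat.cast_ne_zero.2 m.factorial_ne_zero
  have h2 : ((m:ℝ)+1) ≠ 0 := by positivity
  rw [cc, cc, Finset.prod_range_succ, Nat.factorial_succ]
  push_cast
  rw [div_mul_div_comm, mul_comm ((m:ℝ)+1)]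

lemma cc_abs (m : ℕ) : |cc m| ≤ 1 := by
  induction m with
  | zero => simp [cc_zero]
  | succ n ih =>
    rw [cc_succ, abs_mul]
    have hn : (0:ℝ) ≤ (n:ℝ) := Nat.cast_nonneg n
    have h1 : |(2/3 - (n:ℝ)) / ((n:ℝ)+1)| ≤ 1 := by
      rw [abs_div, abs_of_pos (by positivity : (0:ℝ) < (n:ℝ)+1), div_le_one (by positivity)]
      rw [abs_le]
      constructor <;> linarith
    calc |cc n| * |(2/3 - (n:ℝ)) / ((n:ℝ)+1)| ≤ 1 * 1 :=
          mul_le_mul ih h1 (abs_nonneg _) zero_le_one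
      _ = 1 := by ring

lemma summable_cc (x : ℝ) (hx : |x| ≤ 9/10) : Summable (fun m => cc m * x^m) := by
  apply Summable.of_norm_bounded (g := fun m => (9/10:ℝ)^m)
    (summable_geometric_of_lt_one (by norm_num) (by norm_num))
  intro m
  rw [norm_mul, norm_pow, Real.norm_eq_abs, Real.norm_eq_abs]
  calc |cc m| * |x|^m ≤ 1 * (9/10)^m :=
        mul_le_mul (cc_abs m) (pow_le_pow_left₀ (abs_nonneg x) hx m) (by positivity) zero_le_one
    _ = (9/10)^m := one_mul _

lemma summable_mul_geom : Summable (fun m : ℕ => (m:ℝ) * (9/10:ℝ)^m) := by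
  have h := summable_pow_mul_geometric_of_norm_lt_one (R := ℝ) 1
    (r := 9/10) (by rw [Real.norm_eq_abs, abs_of_pos] <;> norm_num)
  exact h.congr fun m => by simp

lemma summable_mul_cc (x : ℝ) (hx : |x| ≤ 9/10) :
    Summable (fun m : ℕ => (m:ℝ) * (cc m * x^m)) := by
  apply Summable.of_norm_bounded (g := fun m : ℕ => (m:ℝ) * (9/10:ℝ)^m) summable_mul_geom
  intro m
  rw [norm_mul, norm_mul, norm_pow, Real.norm_eq_abs, Real.norm_eq_abs, Real.norm_eq_abs,
    abs_of_nonneg (Nat.cast_nonneg m : (0:ℝ) ≤ (m:ℝ))]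
  have : |cc m| * |x|^m ≤ 1 * (9/10)^m :=
    mul_le_mul (cc_abs m) (pow_le_pow_left₀ (abs_nonneg x) hx m) (by positivity) zero_le_one
  have hm : (0:ℝ) ≤ (m:ℝ) := Nat.cast_nonneg m
  nlinarith [abs_nonneg (cc m), pow_nonneg (abs_nonneg x) m]

lemma summable_u : Summable (fun m : ℕ => (m:ℝ) * (9/10:ℝ)^(m-1)) := by
  apply (summable_mul_geom.mul_left (10/9)).congr
  intro m
  cases m with
  | zero => simp
  | succ n =>
    simp only [Nat.add_sub_cancel, pow_succ]
    push_cast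
    ring

lemma hasSum_main : HasSum (fun m => cc m * (-3/4:ℝ)^m) ((1/4:ℝ) ^ ((2:ℝ)/3)) := by
  set t : Set ℝ := Set.Ioo (-(9/10)) (9/10) with htdef
  have habs : ∀ y ∈ t, |y| ≤ 9/10 := by
    intro y hy
    rw [htdef, Set.mem_Ioo] at hy
    rw [abs_le]
    constructor <;> linarith [hy.1, hy.2]
  have hg : ∀ (m : ℕ) (y : ℝ), y ∈ t →
      HasDerivAt (fun z : ℝ => cc m * z^m) (cc m * ((m:ℝ) * y^(m-1))) y :=
    fun m y _ => (hasDerivAt_pow m y).const_mul (cc m)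
  have hg' : ∀ (m : ℕ) (y : ℝ), y ∈ t →
      ‖cc m * ((m:ℝ) * y^(m-1))‖ ≤ (m:ℝ) * (9/10:ℝ)^(m-1) := by
    intro m y hy
    rw [Real.norm_eq_abs, abs_mul, abs_mul, abs_of_nonneg (Nat.cast_nonneg m : (0:ℝ) ≤ (m:ℝ)),
      abs_pow]
    have hyp : |y|^(m-1) ≤ (9/10:ℝ)^(m-1) := pow_le_pow_left₀ (abs_nonneg y) (habs y hy) _
    have hm : (0:ℝ) ≤ (m:ℝ) := Nat.cast_nonneg m
    calc |cc m| * ((m:ℝ) * |y|^(m-1)) ≤ 1 * ((m:ℝ) * (9/10:ℝ)^(m-1)) :=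
          mul_le_mul (cc_abs m) (mul_le_mul_of_nonneg_left hyp hm)
            (by positivity) zero_le_one
      _ = (m:ℝ) * (9/10:ℝ)^(m-1) := one_mul _
  have h0t : (0:ℝ) ∈ t := by rw [htdef]; constructor <;> norm_num
  have hs0 : Summable (fun m => cc m * (0:ℝ)^m) := summable_cc 0 (by norm_num)
  have hFderiv : ∀ y ∈ t, HasDerivAt (fun z : ℝ => ∑' m, cc m * z^m)
      (∑' m, cc m * ((m:ℝ) * y^(m-1))) y := fun y hy =>
    hasDerivAt_tsum_of_isPreconnected summable_u isOpen_Ioo (isPreconnected_Ioo) hg hg' h0t hs0 hy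
  have hODE : ∀ y ∈ t, (1+y) * (∑' m, cc m * ((m:ℝ)*y^(m-1))) = (2/3) * ∑' m, cc m * y^m := by
    intro y hy
    have hya := habs y hy
    have S1 : Summable (fun m => cc m * y^m) := summable_cc y hya
    have S2 : Summable (fun m : ℕ => (m:ℝ) * (cc m * y^m)) := summable_mul_cc y hya
    have SD : Summable (fun m : ℕ => cc m * ((m:ℝ) * y^(m-1))) :=
      Summable.of_norm_bounded summable_u (fun m => hg' m y hy)
    have hxD : y * (∑' m, cc m * ((m:ℝ)*y^(m-1))) = ∑' m : ℕ, (m:ℝ) * (cc m * y^m) := by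
      rw [← tsum_mul_left]
      apply tsum_congr
      intro m
      cases m with
      | zero => simp
      | succ n =>
        simp only [Nat.add_sub_cancel]
        rw [pow_succ]
        push_cast
        ring
    have hshift : (∑' m : ℕ, cc m * ((m:ℝ)*y^(m-1)))
        = ∑' m : ℕ, (2/3 - (m:ℝ)) * (cc m * y^m) := by
      rw [Summable.tsum_eq_zero_add SD]
      simp only [Nat.cast_zero, zero_mul, mul_zero, zero_add, Nat.add_sub_cancel]
      apply tsum_congr
      intro n
      have h2 : ((n:ℝ)+1) ≠ 0 := by positivity
      rw [cc_succ n]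
      push_cast
      field_simp
    have hsub : (∑' m : ℕ, (2/3 - (m:ℝ)) * (cc m * y^m))
        = (2/3) * (∑' m, cc m * y^m) - ∑' m : ℕ, (m:ℝ) * (cc m * y^m) := by
      rw [← tsum_mul_left, ← Summable.tsum_sub (S1.mul_left (2/3)) S2]
      apply tsum_congr
      intro m
      ring
    rw [add_mul, one_mul, hxD, hshift, hsub]
    ring
  have hH : ∀ y ∈ Set.Icc (-(3/4):ℝ) 0, HasDerivAt
      (fun z : ℝ => (∑' m, cc m * z^m) * (1+z) ^ (-(2:ℝ)/3)) 0 y := by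
    intro y hy
    obtain ⟨hy1, hy2⟩ := hy
    have hyt : y ∈ t := by rw [htdef, Set.mem_Ioo]; exact ⟨by linarith, by linarith⟩
    have hy0 : (0:ℝ) < 1 + y := by linarith
    have hbase : HasDerivAt (fun z : ℝ => 1 + z) 1 y := (hasDerivAt_id y).const_add 1
    have hr : HasDerivAt (fun z : ℝ => (1+z) ^ (-(2:ℝ)/3))
        (1 * (-(2:ℝ)/3) * (1+y) ^ (-(2:ℝ)/3 - 1)) y :=
      hbase.rpow_const (Or.inl (ne_of_gt hy0))
    have hmul := (hFderiv y hyt).mul hr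
    have hsplit : (1+y) * (1+y) ^ (-(2:ℝ)/3 - 1) = (1+y) ^ (-(2:ℝ)/3) := by
      rw [Real.rpow_sub hy0, Real.rpow_one, mul_comm, div_mul_cancel₀ _ (ne_of_gt hy0)]
    convert hmul using 1
    · rfl
    · rfl
    · rfl
    rw [← hsplit]
    linear_combination (-(1+y) ^ (-(2:ℝ)/3 - 1)) * hODE y hyt
  have hconst := constant_of_has_deriv_right_zero
    (f := fun z : ℝ => (∑' m, cc m * z^m) * (1+z) ^ (-(2:ℝ)/3)) (a := -(3/4)) (b := 0)
    (fun y hy => (hH y hy).continuousAt.continuousWithinAt)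
    (fun y hy => (hH y (Set.Ico_subset_Icc_self hy)).hasDerivWithinAt)
  have h0 := hconst 0 (by constructor <;> norm_num)
  have hF0 : (∑' m, cc m * (0:ℝ)^m) = 1 := by
    rw [tsum_eq_single 0 (fun m hm => by simp [zero_pow hm])]
    simp [cc_zero]
  rw [hF0, one_mul] at h0
  have hone : (1 + (0:ℝ)) ^ (-(2:ℝ)/3) = 1 := by
    norm_num
  rw [hone] at h0
  -- h0 : 1 = (∑' m, cc m * (-(3/4))^m) * (1 + -(3/4)) ^ (-(2:ℝ)/3)
  have hq : (1 + -(3/4) : ℝ) = 1/4 := by norm_num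
  rw [hq] at h0
  have hpos : (0:ℝ) < (1/4:ℝ) ^ (-(2:ℝ)/3) := Real.rpow_pos_of_pos (by norm_num) _
  have hval : (∑' m, cc m * (-(3/4):ℝ)^m) = (1/4:ℝ) ^ ((2:ℝ)/3) := by
    have h1 : (∑' m, cc m * (-(3/4):ℝ)^m) = ((1/4:ℝ) ^ (-(2:ℝ)/3))⁻¹ :=
      eq_inv_of_mul_eq_one_left h0.symm
    rw [h1, ← Real.rpow_neg (by norm_num : (0:ℝ) ≤ 1/4)]
    norm_num
  have hsum : Summable (fun m => cc m * (-3/4:ℝ)^m) := summable_cc _ (by rw [abs_le]; constructor <;> norm_num)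
  have := hsum.hasSum
  rw [show ((-3/4:ℝ)) = (-(3/4):ℝ) by norm_num] at this ⊢
  rwa [hval] at this

lemma ckey (n : ℕ) : (3*(n:ℝ)+1) * (cc (n+1) * (-3/4:ℝ)^(n+1))
    = 4*((n:ℝ)+2) * (cc (n+2) * (-3/4:ℝ)^(n+2)) := by
  have h : cc (n+2) = cc (n+1) * ((2/3 - ((n:ℝ)+1)) / ((n:ℝ)+2)) := by
    have h0 := cc_succ (n+1)
    push_cast at h0
    rw [show ((n:ℝ)+1+1) = (n:ℝ)+2 by ring] at h0
    exact h0
  rw [h, pow_succ]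
  have h2 : ((n:ℝ)+2) ≠ 0 := by positivity
  field_simp
  ring

lemma valL : 1 / (2 * ((1/4:ℝ) ^ ((2:ℝ)/3))) = (2:ℝ) ^ ((1:ℝ)/3) := by
  have h2 : (0:ℝ) < 2 := by norm_num
  have e0 : ((1:ℝ)/4) = (2:ℝ) ^ (-2:ℝ) := by
    rw [show (-2:ℝ) = ((-2:ℤ):ℝ) by norm_num, Real.rpow_intCast]
    norm_num
  have e1 : ((1:ℝ)/4) ^ ((2:ℝ)/3) = (2:ℝ) ^ (-(4:ℝ)/3) := by
    rw [e0, ← Real.rpow_mul (le_of_lt h2)]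
    norm_num
  have e2 : (2:ℝ) * (2:ℝ) ^ (-(4:ℝ)/3) = (2:ℝ) ^ (-(1:ℝ)/3) := by
    nth_rewrite 1 [← Real.rpow_one (2:ℝ)]
    rw [← Real.rpow_add h2]
    norm_num
  rw [e1, e2, one_div, ← Real.rpow_neg (le_of_lt h2)]
  norm_num

theorem stmt_10 
    (a b p q : ℕ → ℝ)
    (ha0 : a 0 = 1 / 2)
    (ha : ∀ n : ℕ, 1 ≤ n → a n = 7 * (n : ℝ) - 5)
    (hb0 : b 0 = 1)
    (hb : ∀ n : ℕ, 1 ≤ n → b n = -(4 * (n : ℝ) * (3 * (n : ℝ) - 2)))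
    (hp0 : p 0 = a 0) (hq0 : q 0 = 1)
    (hp1 : p 1 = a 0 * a 1 + b 0) (hq1 : q 1 = a 1)
    (hp : ∀ n : ℕ, p (n + 2) = a (n + 2) * p (n + 1) + b (n + 1) * p n)
    (hq : ∀ n : ℕ, q (n + 2) = a (n + 2) * q (n + 1) + b (n + 1) * q n) :
    Tendsto (fun n => p n / q n) atTop (𝓝 ((2 : ℝ) ^ ((1 : ℝ) / 3))) := by
  have ha1 : a 1 = 2 := by rw [ha 1 le_rfl]; norm_num
  set U : ℕ → ℝ := fun n => ∑ m ∈ Finset.range (n+1), cc m * (-3/4:ℝ)^m with hUdef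
  have hU0 : U 0 = 1 := by simp [hUdef, cc_zero]
  have hU1 : U 1 = 1/2 := by
    have hc1 : cc 1 = 2/3 := by
      rw [cc_succ 0, cc_zero]; norm_num
    simp only [hUdef]
    rw [Finset.sum_range_succ, Finset.sum_range_one, cc_zero, hc1]
    norm_num
  have hUsucc : ∀ n, U (n+1) = U n + cc (n+1) * (-3/4:ℝ)^(n+1) := fun n =>
    Finset.sum_range_succ _ _
  have key : ∀ n : ℕ, p n = 4^n * (n.factorial:ℝ) / 2 ∧ q n = 4^n * (n.factorial:ℝ) * U n := by
    have H : ∀ n : ℕ, (p n = 4^n * (n.factorial:ℝ) / 2 ∧ q n = 4^n * (n.factorial:ℝ) * U n)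
        ∧ (p (n+1) = 4^(n+1) * ((n+1).factorial:ℝ) / 2
          ∧ q (n+1) = 4^(n+1) * ((n+1).factorial:ℝ) * U (n+1)) := by
      intro n
      induction n with
      | zero =>
        refine ⟨⟨?_, ?_⟩, ?_, ?_⟩
        · rw [hp0, ha0]; norm_num
        · rw [hq0, hU0]; norm_num
        · rw [hp1, ha0, ha1, hb0]; norm_num
        · rw [hq1, ha1, hU1]; norm_num
      | succ n ih =>
        refine ⟨ih.2, ?_, ?_⟩
        · rw [hp n, ha (n+2) (by omega), hb (n+1) (by omega), ih.1.1, ih.2.1]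
          push_cast [Nat.factorial_succ]
          ring
        · rw [hq n, ha (n+2) (by omega), hb (n+1) (by omega), ih.1.2, ih.2.2,
            hUsucc (n+1), hUsucc n]
          have hAB := ckey n
          push_cast [Nat.factorial_succ]
          linear_combination (4*((n:ℝ)+1) * 4^n * (n.factorial:ℝ)) * hAB
    exact fun n => (H n).1
  have hpq : ∀ n, p n / q n = 1 / (2 * U n) := by
    intro n
    obtain ⟨hpn, hqn⟩ := key n
    rw [hpn, hqn]
    have hK : ((4:ℝ)^n * (n.factorial:ℝ)) ≠ 0 := by positivity
    rw [div_div, mul_left_comm, div_mul_cancel_left₀ hK, one_div]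
  have hUlim : Tendsto U atTop (𝓝 ((1/4:ℝ) ^ ((2:ℝ)/3))) := by
    have h := hasSum_main.tendsto_sum_nat
    exact h.comp (tendsto_add_atTop_nat 1)
  have h2L : (2 * ((1/4:ℝ) ^ ((2:ℝ)/3))) ≠ 0 := by
    have := Real.rpow_pos_of_pos (show (0:ℝ) < 1/4 by norm_num) ((2:ℝ)/3)
    positivity
  have hlim : Tendsto (fun n => 1 / (2 * U n)) atTop
      (𝓝 (1 / (2 * ((1/4:ℝ) ^ ((2:ℝ)/3))))) :=
    tendsto_const_nhds.div (hUlim.const_mul 2) h2L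
  rw [← valL]
  exact hlim.congr fun n => (hpq n).symm
end

section
/- Define a(0) = 3, a(1) = 24, and a(n) = 20n² + 4n + 1 for n ≥ 2, and b(0) = 3 and b(n) = −8n(2n+1)³ for n ≥ 1. Then the convergents p(n)/q(n) of the continued fraction with partial quotients (a(n), b(n)) converge to π as n → ∞. -/
open Filter Topology Finset

noncomputable def cb (m : ℕ) : ℝ := (Nat.centralBinom m : ℝ)

noncomputable def Qf (n : ℕ) : ℝ := 4 ^ n * (Nat.factorial (2 * n + 1) : ℝ)

noncomputable def tm (m : ℕ) : ℝ := 3 * cb m / ((2 * m + 1) * 16 ^ m)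

noncomputable def sfun (n : ℕ) : ℝ := ∑ m ∈ Finset.range (n + 1), tm m

lemma cb_succ (n : ℕ) : ((n : ℝ) + 1) * cb (n + 1) = 2 * (2 * n + 1) * cb n := by
  have h := Nat.succ_mul_centralBinom_succ n
  have : ((n + 1) * Nat.centralBinom (n + 1) : ℝ) = (2 * (2 * n + 1) * Nat.centralBinom n : ℝ) := by
    exact_mod_cast congrArg (Nat.cast : ℕ → ℝ) h
  push_cast at this
  simpa [cb] using this

lemma fact_step (n : ℕ) : (Nat.factorial (2 * (n + 1) + 1) : ℝ)
    = (2 * n + 3) * (2 * n + 2) * (Nat.factorial (2 * n + 1) : ℝ) := by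
  have : 2 * (n + 1) + 1 = (2 * n + 1) + 1 + 1 := by ring
  rw [this, Nat.factorial_succ, Nat.factorial_succ]
  push_cast
  ring

lemma Qf_pos (n : ℕ) : 0 < Qf n := by
  have h : (0:ℝ) < (Nat.factorial (2 * n + 1) : ℝ) := by exact_mod_cast Nat.factorial_pos _
  have h4 : (0:ℝ) < 4 ^ n := by positivity
  exact mul_pos h4 h

lemma Qf_rec (n : ℕ) : Qf (n + 2)
    = (20 * ((n : ℝ) + 2) ^ 2 + 4 * ((n : ℝ) + 2) + 1) * Qf (n + 1)
      - 8 * ((n : ℝ) + 1) * (2 * ((n : ℝ) + 1) + 1) ^ 3 * Qf n := by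
  have h1 := fact_step n
  have h2 := fact_step (n + 1)
  simp only [Qf]
  rw [show n + 2 = (n + 1) + 1 from rfl, h2, h1]
  push_cast
  ring

lemma cb_pos (n : ℕ) : 0 < cb n := by
  unfold cb
  exact_mod_cast Nat.centralBinom_pos n

lemma cb_two_add (n : ℕ) : cb (n + 2) = 2 * (2 * (n : ℝ) + 3) * cb (n + 1) / ((n : ℝ) + 2) := by
  have h := cb_succ (n + 1)
  have hne : ((n : ℝ) + 2) ≠ 0 := by positivity
  rw [eq_div_iff hne]
  push_cast at h
  linarith [h]

lemma keyPQ (n : ℕ) : Qf (n + 2) * tm (n + 2)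
    = 8 * ((n : ℝ) + 1) * (2 * ((n : ℝ) + 1) + 1) ^ 3 * (Qf n * tm (n + 1)) := by
  have h1 := fact_step n
  have h2 := fact_step (n + 1)
  simp only [Qf, tm]
  rw [show n + 2 = (n + 1) + 1 from rfl, h2, h1, show (n+1)+1 = n + 2 from rfl, cb_two_add]
  push_cast
  have d1 : (2 * ((n : ℝ) + 2) + 1) ≠ 0 := by positivity
  have d2 : (2 * ((n : ℝ) + 1) + 1) ≠ 0 := by positivity
  have d5 : ((n : ℝ) + 2) ≠ 0 := by positivity
  have d3 : (16 : ℝ) ^ (n + 2) ≠ 0 := by positivity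
  have d4 : (16 : ℝ) ^ (n + 1) ≠ 0 := by positivity
  field_simp
  ring

lemma cb_zero : cb 0 = 1 := by simp [cb, Nat.centralBinom]

lemma cb_one : cb 1 = 2 := by simp [cb]; rfl

lemma sfun_zero : sfun 0 = 3 := by
  simp [sfun, tm, cb_zero]

lemma sfun_succ (n : ℕ) : sfun (n + 1) = sfun n + tm (n + 1) := by
  simp [sfun, Finset.sum_range_succ]
noncomputable def ff (n : ℕ) (x : ℝ) : ℝ := ∑ m ∈ range (n + 1), cb m / 4 ^ m * x ^ (2 * m)

noncomputable def ffd (n : ℕ) (x : ℝ) : ℝ :=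
  ∑ m ∈ range (n + 1), cb m / 4 ^ m * (2 * m * x ^ (2 * m - 1))

noncomputable def Ff (n : ℕ) (x : ℝ) : ℝ :=
  ∑ m ∈ range (n + 1), cb m / ((2 * m + 1) * 4 ^ m) * x ^ (2 * m + 1)

lemma hasDerivAt_ff (n : ℕ) (x : ℝ) : HasDerivAt (ff n) (ffd n x) x := by
  apply HasDerivAt.fun_sum
  intro m _
  simpa [mul_comm, mul_assoc, mul_left_comm] using
    (hasDerivAt_pow (2 * m) x).const_mul (cb m / 4 ^ m)

lemma hasDerivAt_Ff (n : ℕ) (x : ℝ) : HasDerivAt (Ff n) (ff n x) x := by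
  apply HasDerivAt.fun_sum
  intro m _
  have h := (hasDerivAt_pow (2 * m + 1) x).const_mul (cb m / ((2 * m + 1) * 4 ^ m))
  refine h.congr_deriv ?_
  have h1 : ((2 * m + 1 : ℕ) : ℝ) ≠ 0 := by positivity
  simp only [Nat.add_sub_cancel]
  push_cast
  field_simp

lemma keyId (n : ℕ) (x : ℝ) :
    (1 - x ^ 2) * ffd n x - x * ff n x = -((2 * n + 1) * (cb n / 4 ^ n) * x ^ (2 * n + 1)) := by
  induction n with
  | zero =>
    simp [ff, ffd, cb_zero]
  | succ k ih =>
    have hcb := cb_succ k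
    simp only [ff, ffd] at ih ⊢
    rw [Finset.sum_range_succ (n := k + 1), Finset.sum_range_succ (n := k + 1)]
    have e1 : 2 * (k + 1) - 1 = 2 * k + 1 := by omega
    rw [e1]
    have e2 : 2 * (k + 1) = 2 * k + 2 := by omega
    rw [e2]
    push_cast
    have h4 : (4 : ℝ) ^ (k + 1) = 4 * 4 ^ k := by ring
    rw [h4]
    have h4k : (4 : ℝ) ^ k ≠ 0 := by positivity
    linear_combination ih + (x ^ (2 * k + 1) / (2 * 4 ^ k)) * hcb

lemma ff_zero (n : ℕ) : ff n 0 = 1 := by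
  unfold ff
  rw [Finset.sum_eq_single 0]
  · simp [cb_zero]
  · intro m _ hm
    have : 2 * m ≠ 0 := by omega
    simp [zero_pow this]
  · simp

lemma Ff_zero (n : ℕ) : Ff n 0 = 0 := by
  unfold Ff
  apply Finset.sum_eq_zero
  intro m _
  simp

lemma cb_le (n : ℕ) : cb n ≤ 4 ^ n := by
  unfold cb
  have h1 : Nat.centralBinom n ≤ (2 * n + 1).choose n :=
    Nat.choose_le_choose n (by omega)
  have h2 : (2 * n + 1).choose n ≤ 4 ^ n := Nat.choose_middle_le_pow n
  exact_mod_cast h1.trans h2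

lemma mono_Icc {g g' : ℝ → ℝ} {a c : ℝ}
    (hd : ∀ x ∈ Set.Icc a c, HasDerivAt g (g' x) x)
    (h0 : ∀ x ∈ Set.Icc a c, 0 ≤ g' x) : MonotoneOn g (Set.Icc a c) := by
  apply monotoneOn_of_deriv_nonneg (convex_Icc a c)
  · exact fun x hx => (hd x hx).continuousAt.continuousWithinAt
  · intro x hx
    have hx' : x ∈ Set.Icc a c := interior_subset hx
    exact ((hd x hx').differentiableAt).differentiableWithinAt
  · intro x hx
    have hx' : x ∈ Set.Icc a c := interior_subset hx
    rw [(hd x hx').deriv]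
    exact h0 x hx'

lemma arcsin_half : Real.arcsin (1 / 2) = Real.pi / 6 := by
  rw [← Real.sin_pi_div_six, Real.arcsin_sin] <;> nlinarith [Real.pi_pos]

lemma main_bound (n : ℕ) :
    0 ≤ Real.pi - 6 * Ff n (1 / 2) ∧
      Real.pi - 6 * Ff n (1 / 2) ≤ 3 * ((2 * n + 1) * (1 / 4 : ℝ) ^ n) := by
  set B : ℝ := (2 * n + 1) * (1 / 4 : ℝ) ^ n with hB
  set I : Set ℝ := Set.Icc 0 (1 / 2) with hI
  set u : ℝ → ℝ := fun y => 1 - ff n y * Real.sqrt (1 - y ^ 2) with hu_def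
  set v : ℝ → ℝ := fun y => (2 * n + 1) * (cb n / 4 ^ n) * y ^ (2 * n + 1) / Real.sqrt (1 - y ^ 2)
    with hv_def
  have hx2 : ∀ x ∈ I, (0 : ℝ) < 1 - x ^ 2 := by
    rintro x ⟨h1, h2⟩
    nlinarith
  have hs_pos : ∀ x ∈ I, (0 : ℝ) < Real.sqrt (1 - x ^ 2) := fun x hx =>
    Real.sqrt_pos.2 (hx2 x hx)
  have hs_half : ∀ x ∈ I, (1 / 2 : ℝ) ≤ Real.sqrt (1 - x ^ 2) := by
    rintro x hx
    have := hx2 x hx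
    rw [show (1 / 2 : ℝ) = Real.sqrt (1 / 4) by
      rw [show (1 / 4 : ℝ) = (1 / 2) ^ 2 by norm_num, Real.sqrt_sq (by norm_num)]]
    apply Real.sqrt_le_sqrt
    rcases hx with ⟨h1, h2⟩
    nlinarith
  have hsq : ∀ x ∈ I, Real.sqrt (1 - x ^ 2) ^ 2 = 1 - x ^ 2 := fun x hx =>
    Real.sq_sqrt (hx2 x hx).le
  -- derivative of sqrt(1 - y^2)
  have hs_deriv : ∀ x ∈ I, HasDerivAt (fun y : ℝ => Real.sqrt (1 - y ^ 2))
      (-x / Real.sqrt (1 - x ^ 2)) x := by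
    intro x hx
    have h1 : HasDerivAt (fun y : ℝ => 1 - y ^ 2) (-(2 * x)) x := by
      simpa using ((hasDerivAt_pow 2 x).const_sub 1)
    have h2 := (Real.hasDerivAt_sqrt (hx2 x hx).ne').comp x h1
    refine h2.congr_deriv ?_
    have hs0 := (hs_pos x hx).ne'
    field_simp
  -- derivative of u
  have hu_deriv : ∀ x ∈ I, HasDerivAt u (v x) x := by
    intro x hx
    have h1 := ((hasDerivAt_ff n x).mul (hs_deriv x hx)).const_sub 1
    have hs0 := (hs_pos x hx).ne'
    have hk := keyId n x
    have h2 := hsq x hx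
    have e : -(ffd n x * Real.sqrt (1 - x ^ 2) + ff n x * (-x / Real.sqrt (1 - x ^ 2)))
        = (x * ff n x - (1 - x ^ 2) * ffd n x) / Real.sqrt (1 - x ^ 2) := by
      field_simp
      linear_combination (-(ffd n x)) * h2
    rw [e] at h1
    refine h1.congr_deriv ?_
    simp only [hv_def]
    congr 1
    linarith [hk]
  have hu_zero : u 0 = 0 := by
    simp [hu_def, ff_zero]
  have hv_nonneg : ∀ x ∈ I, 0 ≤ v x := by
    rintro x hx
    have h1 := (hs_pos x hx).le
    have h2 : (0:ℝ) ≤ cb n := by unfold cb; exact Nat.cast_nonneg _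
    have h3 : (0:ℝ) ≤ x := hx.1
    apply div_nonneg _ h1
    apply mul_nonneg (mul_nonneg (by positivity) (div_nonneg h2 (by positivity)))
      (pow_nonneg h3 _)
  have hv_le : ∀ x ∈ I, v x ≤ B := by
    rintro x hx
    have hs0 := hs_pos x hx
    have hsh := hs_half x hx
    rw [hv_def]
    rw [div_le_iff₀ hs0]
    have hcb : cb n / 4 ^ n ≤ 1 := by
      rw [div_le_one (by positivity)]
      exact cb_le n
    have hcb0 : 0 ≤ cb n / 4 ^ n := by
      have h2 : (0:ℝ) ≤ cb n := by unfold cb; exact Nat.cast_nonneg _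
      positivity
    have hxp : x ^ (2 * n + 1) ≤ (1 / 2 : ℝ) ^ (2 * n + 1) :=
      pow_le_pow_left₀ hx.1 hx.2 _
    have hhalf : ((1 / 2 : ℝ)) ^ (2 * n + 1) = (1 / 4 : ℝ) ^ n * (1 / 2) := by
      rw [pow_succ, pow_mul]; norm_num
    have hT : (2 * n + 1 : ℝ) * (cb n / 4 ^ n) * x ^ (2 * n + 1)
        ≤ (2 * n + 1 : ℝ) * (1 / 4 : ℝ) ^ n * (1 / 2) := by
      calc (2 * n + 1 : ℝ) * (cb n / 4 ^ n) * x ^ (2 * n + 1)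
          ≤ (2 * n + 1 : ℝ) * 1 * ((1 / 4 : ℝ) ^ n * (1 / 2)) := by
            rw [← hhalf]
            exact mul_le_mul (by nlinarith [hcb]) hxp (pow_nonneg hx.1 _) (by positivity)
        _ = (2 * n + 1 : ℝ) * (1 / 4 : ℝ) ^ n * (1 / 2) := by ring
    have hBnn : (0:ℝ) ≤ B := by rw [hB]; positivity
    have hstep : B * (1 / 2) ≤ B * Real.sqrt (1 - x ^ 2) :=
      mul_le_mul_of_nonneg_left hsh hBnn
    nlinarith [hT, hstep, hB]
  -- u is between 0 and B * x on I
  have hu_mono : MonotoneOn u I := mono_Icc hu_deriv hv_nonneg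
  have hu_nonneg : ∀ x ∈ I, 0 ≤ u x := by
    intro x hx
    have h0 : (0:ℝ) ∈ I := by constructor <;> norm_num
    have := hu_mono h0 hx hx.1
    rwa [hu_zero] at this
  have hu_le : ∀ x ∈ I, u x ≤ B * x := by
    intro x hx
    have hmono : MonotoneOn (fun y => B * y - u y) I := by
      apply mono_Icc (g' := fun y => B - v y)
      · intro y hy
        have hid : HasDerivAt (fun z : ℝ => B * z) B y := by
          simpa using (hasDerivAt_id y).const_mul B
        exact hid.sub (hu_deriv y hy)
      · intro y hy
        have := hv_le y hy
        linarith
    have h0 : (0:ℝ) ∈ I := by constructor <;> norm_num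
    have := hmono h0 hx hx.1
    simp only [hu_zero] at this
    simp only [mul_zero, sub_zero] at this
    linarith
  -- function h = arcsin - Ff n
  set h : ℝ → ℝ := fun y => Real.arcsin y - Ff n y with hh_def
  have hh_deriv : ∀ x ∈ I, HasDerivAt h (u x / Real.sqrt (1 - x ^ 2)) x := by
    intro x hx
    have hx1 : x ≠ -1 := by rcases hx with ⟨h1, h2⟩; intro he; rw [he] at h1; norm_num at h1
    have hx1' : x ≠ 1 := by rcases hx with ⟨h1, h2⟩; intro he; rw [he] at h2; norm_num at h2
    have h1 := (Real.hasDerivAt_arcsin hx1 hx1').sub (hasDerivAt_Ff n x)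
    refine h1.congr_deriv ?_
    have hs0 := (hs_pos x hx).ne'
    rw [hu_def]
    field_simp
  have hh_nonneg : ∀ x ∈ I, 0 ≤ u x / Real.sqrt (1 - x ^ 2) := fun x hx =>
    div_nonneg (hu_nonneg x hx) (hs_pos x hx).le
  have hh_le : ∀ x ∈ I, u x / Real.sqrt (1 - x ^ 2) ≤ B := by
    intro x hx
    rw [div_le_iff₀ (hs_pos x hx)]
    have h1 := hu_le x hx
    have h2 := hs_half x hx
    have h3 : x ≤ 1 / 2 := hx.2
    have h4 : 0 ≤ B := by positivity
    nlinarith [hu_nonneg x hx]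
  have h0I : (0:ℝ) ∈ I := by constructor <;> norm_num
  have hhalfI : (1/2:ℝ) ∈ I := by constructor <;> norm_num
  have hh_zero : h 0 = 0 := by simp [hh_def, Ff_zero]
  have hmono1 : MonotoneOn h I := mono_Icc hh_deriv hh_nonneg
  have hge : 0 ≤ h (1 / 2) := by
    have := hmono1 h0I hhalfI (by norm_num)
    rwa [hh_zero] at this
  have hle : h (1 / 2) ≤ B / 2 := by
    have hmono2 : MonotoneOn (fun y => B * y - h y) I := by
      apply mono_Icc (g' := fun y => B - u y / Real.sqrt (1 - y ^ 2))
      · intro y hy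
        have hid : HasDerivAt (fun z : ℝ => B * z) B y := by
          simpa using (hasDerivAt_id y).const_mul B
        exact hid.sub (hh_deriv y hy)
      · intro y hy
        have := hh_le y hy
        linarith
    have := hmono2 h0I hhalfI (by norm_num)
    simp only [hh_zero, mul_zero, sub_zero] at this
    linarith
  have harc : h (1 / 2) = Real.pi / 6 - Ff n (1 / 2) := by
    simp only [hh_def]
    rw [arcsin_half]
  rw [harc] at hge hle
  constructor <;> [linarith; linarith]

lemma sfun_eq_Ff (n : ℕ) : sfun n = 6 * Ff n (1 / 2) := by
  rw [sfun, Ff, Finset.mul_sum]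
  apply Finset.sum_congr rfl
  intro m _
  have h16 : (16 : ℝ) ^ m = 4 ^ m * 4 ^ m := by rw [← mul_pow]; norm_num
  have hh : ((1 / 2 : ℝ)) ^ (2 * m + 1) = 1 / (4 ^ m * 2) := by
    rw [pow_succ, pow_mul]
    rw [show ((1:ℝ)/2)^2 = (4:ℝ)⁻¹ by norm_num, inv_pow]
    field_simp
  rw [tm, h16, hh]
  have d1 : (2 * (m : ℝ) + 1) ≠ 0 := by positivity
  have d2 : (4 : ℝ) ^ m ≠ 0 := by positivity
  field_simp
  ring

lemma tendsto_B : Tendsto (fun n : ℕ => 3 * ((2 * (n : ℝ) + 1) * (1 / 4 : ℝ) ^ n)) atTop (𝓝 0) := by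
  have hgeo : Tendsto (fun n : ℕ => ((n : ℝ)) ^ 1 * (1 / 4 : ℝ) ^ n) atTop (𝓝 0) :=
    (summable_pow_mul_geometric_of_norm_lt_one 1
      (by rw [Real.norm_eq_abs, abs_of_pos] <;> norm_num : ‖(1 / 4 : ℝ)‖ < 1)).tendsto_atTop_zero
  have h2 : Tendsto (fun n : ℕ => ((1 : ℝ) / 4) ^ n) atTop (𝓝 0) :=
    tendsto_pow_atTop_nhds_zero_of_lt_one (by norm_num) (by norm_num)
  have heq : (fun n : ℕ => 3 * ((2 * (n : ℝ) + 1) * (1 / 4 : ℝ) ^ n))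
      = fun n : ℕ => 6 * ((n : ℝ) ^ 1 * (1 / 4 : ℝ) ^ n) + 3 * ((1 : ℝ) / 4) ^ n := by
    funext n; ring
  rw [heq]
  simpa using (hgeo.const_mul 6).add (h2.const_mul 3)

lemma tendsto_sfun : Tendsto sfun atTop (𝓝 Real.pi) := by
  have hlo : Tendsto (fun n : ℕ => Real.pi - 3 * ((2 * (n : ℝ) + 1) * (1 / 4 : ℝ) ^ n))
      atTop (𝓝 Real.pi) := by
    simpa using tendsto_const_nhds.sub tendsto_B
  apply tendsto_of_tendsto_of_tendsto_of_le_of_le hlo tendsto_const_nhds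
  · intro n
    have h := (main_bound n).2
    have hs := sfun_eq_Ff n
    linarith
  · intro n
    have h := (main_bound n).1
    have hs := sfun_eq_Ff n
    linarith

theorem stmt_14 
    (a b p q : ℕ → ℝ)
    (ha0 : a 0 = 3)
    (ha1 : a 1 = 24)
    (ha : ∀ n : ℕ, 2 ≤ n → a n = 20 * (n : ℝ) ^ 2 + 4 * (n : ℝ) + 1)
    (hb0 : b 0 = 3)
    (hb : ∀ n : ℕ, 1 ≤ n → b n = -(8 * (n : ℝ) * (2 * (n : ℝ) + 1) ^ 3))
    (hp0 : p 0 = a 0) (hq0 : q 0 = 1)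
    (hp1 : p 1 = a 0 * a 1 + b 0) (hq1 : q 1 = a 1)
    (hp : ∀ n : ℕ, p (n + 2) = a (n + 2) * p (n + 1) + b (n + 1) * p n)
    (hq : ∀ n : ℕ, q (n + 2) = a (n + 2) * q (n + 1) + b (n + 1) * q n) :
    Tendsto (fun n => p n / q n) atTop (𝓝 (Real.pi)) := by
  have hpq : ∀ n, p n / q n = sfun n := by
    have ha2 : ∀ n : ℕ, a (n + 2) = 20 * ((n : ℝ) + 2) ^ 2 + 4 * ((n : ℝ) + 2) + 1 := by
      intro n
      have := ha (n + 2) (by omega)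
      push_cast at this
      convert this using 2
    have hb1 : ∀ n : ℕ, b (n + 1) = -(8 * ((n : ℝ) + 1) * (2 * ((n : ℝ) + 1) + 1) ^ 3) := by
      intro n
      have := hb (n + 1) (by omega)
      push_cast at this
      convert this using 2
    have hQ0 : Qf 0 = 1 := by norm_num [Qf, Nat.factorial]
    have hQ1 : Qf 1 = 24 := by
      norm_num [Qf, Nat.factorial]
    have hqQ : ∀ n, q n = Qf n ∧ q (n + 1) = Qf (n + 1) := by
      intro n
      induction n with
      | zero => exact ⟨by rw [hq0, hQ0], by rw [hq1, ha1, hQ1]⟩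
      | succ k ih =>
        refine ⟨ih.2, ?_⟩
        rw [hq k, ha2 k, hb1 k, ih.1, ih.2, Qf_rec k]
        ring
    have hS1 : sfun 1 = 25 / 8 := by
      rw [sfun_succ, sfun_zero]
      norm_num [tm, cb_one]
    have hpP : ∀ n, p n = Qf n * sfun n ∧ p (n + 1) = Qf (n + 1) * sfun (n + 1) := by
      intro n
      induction n with
      | zero =>
        constructor
        · rw [hp0, ha0, hQ0, sfun_zero]; ring
        · rw [hp1, ha0, ha1, hb0, hQ1, hS1]; norm_num
      | succ k ih =>
        refine ⟨ih.2, ?_⟩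
        rw [hp k, ha2 k, hb1 k, ih.1, ih.2]
        have hrec := Qf_rec k
        have hkey := keyPQ k
        rw [show k + 1 + 1 = k + 2 from rfl, sfun_succ (k + 1)]
        rw [show sfun k = sfun (k + 1) - tm (k + 1) by rw [sfun_succ]; ring]
        linear_combination (-(sfun (k + 1))) * hrec - hkey
    intro n
    rw [(hpP n).1, (hqQ n).1, mul_comm, mul_div_assoc, div_self (Qf_pos n).ne', mul_one]
  exact tendsto_sfun.congr fun n => (hpq n).symm
end
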